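/- arXiv:2103.04229 — 3 statements merged into one kernel-verified Lean document; each statement's English description precedes it below -/
import Mathlib

section
/- For every integer n ≥ 1 the following two identities hold: (i) γ ∫_ℝ P_n(y)² w(y)/(y−t) dy = ∫_ℝ P_n(y)² (2y − t) w(y) dy, and (ii) γ ∫_ℝ P_n(y)P_{n−1}(y) w(y)/(y−t) dy = ∫_ℝ P_n(y)P_{n−1}(y)(2y − t) w(y) dy − n·h_{n−1}. -/
set_option linter.unusedSectionVars false

open MeasureTheory Real Set Filter Polynomial Topology

noncomputable section Aux


lemma integrable_abs_rpow_mul_exp_neg_mul_sq {b : ℝ} (hb : 0 < b) {s : ℝ} (hs : -1 < s) :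
    Integrable fun x : ℝ => |x| ^ s * Real.exp (-b * x ^ 2) := by
  have h0 : IntegrableOn (fun x : ℝ => |x| ^ s * Real.exp (-b * x ^ 2)) (Ioi 0) :=
    (integrableOn_rpow_mul_exp_neg_mul_sq hb hs).congr_fun
      (fun x hx => by rw [abs_of_pos hx]) measurableSet_Ioi
  have h1 : IntegrableOn (fun x : ℝ => |x| ^ s * Real.exp (-b * x ^ 2)) (Iio 0) := by
    rw [← (Measure.measurePreserving_neg (volume : Measure ℝ)).integrableOn_comp_preimage
        (Homeomorph.neg ℝ).measurableEmbedding]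
    simp only [Function.comp_def, neg_preimage, neg_Iio, neg_neg, neg_zero, abs_neg, neg_sq]
    exact h0
  rw [← integrableOn_univ, ← Iio_union_Ici (a := (0:ℝ)), integrableOn_union,
    integrableOn_Ici_iff_integrableOn_Ioi]
  exact ⟨h1, h0⟩

lemma gauss_poly (d : ℕ) : ∀ (β : ℝ), -1 < β →
    Integrable fun x : ℝ => (1 + x ^ 2) ^ d * (|x| ^ β * Real.exp (-(1/2) * x ^ 2)) := by
  induction d with
  | zero => intro β hβ; simpa using integrable_abs_rpow_mul_exp_neg_mul_sq (by norm_num) hβ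
  | succ d ih =>
    intro β hβ
    have h1 := ih β hβ
    have h2 := ih (β + 2) (by linarith)
    have := h1.add h2
    apply this.congr
    filter_upwards with x
    have hx2 : |x| ^ (β + 2) = |x| ^ β * x ^ 2 := by
      rw [Real.rpow_add' (abs_nonneg x) (by linarith)]
      rw [show ((2:ℝ) = ((2:ℕ):ℝ)) by norm_num, Real.rpow_natCast, sq_abs]
    simp only [Pi.add_apply]
    rw [hx2]
    ring


lemma poly_bound (T : Polynomial ℝ) : ∃ C : ℝ, 0 ≤ C ∧
    ∀ x : ℝ, |T.eval x| ≤ C * (1 + x ^ 2) ^ T.natDegree := by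
  classical
  refine ⟨∑ i ∈ Finset.range (T.natDegree + 1), |T.coeff i|,
    Finset.sum_nonneg fun i _ => abs_nonneg _, fun x => ?_⟩
  have h1x : (1:ℝ) ≤ 1 + x ^ 2 := by nlinarith [sq_nonneg x]
  have habs : |x| ≤ 1 + x ^ 2 := by nlinarith [sq_nonneg (|x| - 1), sq_abs x, abs_nonneg x]
  rw [Polynomial.eval_eq_sum_range]
  calc |∑ i ∈ Finset.range (T.natDegree + 1), T.coeff i * x ^ i|
      ≤ ∑ i ∈ Finset.range (T.natDegree + 1), |T.coeff i * x ^ i| :=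
        Finset.abs_sum_le_sum_abs _ _
    _ ≤ ∑ i ∈ Finset.range (T.natDegree + 1), |T.coeff i| * (1 + x ^ 2) ^ T.natDegree := by
        refine Finset.sum_le_sum fun i hi => ?_
        rw [abs_mul, abs_pow]
        refine mul_le_mul_of_nonneg_left ?_ (abs_nonneg _)
        calc |x| ^ i ≤ (1 + x ^ 2) ^ i :=
              pow_le_pow_left₀ (abs_nonneg x) habs i
          _ ≤ (1 + x ^ 2) ^ T.natDegree :=
              pow_le_pow_right₀ h1x (by simp at hi; omega)
    _ = _ := by rw [Finset.sum_mul]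


lemma master (c a β : ℝ) (hβ : -1 < β) (T : Polynomial ℝ) :
    Integrable fun y : ℝ => T.eval y * Real.exp (-y^2 + c*y) * |y - a| ^ β := by
  obtain ⟨K, hK0, hK⟩ := poly_bound (T.comp (Polynomial.X + Polynomial.C a))
  set S := T.comp (Polynomial.X + Polynomial.C a) with hS
  set d := S.natDegree with hd
  set E : ℝ := Real.exp (c*a - a^2 + (c - 2*a)^2/2) with hE
  have hg : Integrable fun y : ℝ =>
      (K * E) * ((1 + (y - a) ^ 2) ^ d * (|y - a| ^ β * Real.exp (-(1/2) * (y - a) ^ 2))) :=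
    Integrable.comp_sub_right ((gauss_poly d β hβ).const_mul (K * E)) a
  refine hg.mono' ?_ ?_
  · apply Measurable.aestronglyMeasurable
    have h1 : Measurable fun y : ℝ => |y - a| ^ β := by measurability
    exact (((T.continuous_aeval).mul (by continuity)).measurable).mul h1
  · filter_upwards with y
    have hSy : S.eval (y - a) = T.eval y := by
      simp [hS, Polynomial.eval_comp]
    have hTb : |T.eval y| ≤ K * (1 + (y - a) ^ 2) ^ d := by
      have := hK (y - a); rwa [hSy] at this
    have hexp : Real.exp (-y^2 + c*y) ≤ E * Real.exp (-(1/2) * (y - a)^2) := by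
      rw [← Real.exp_add]
      apply Real.exp_le_exp.mpr
      nlinarith [sq_nonneg (y - a - (c - 2*a))]
    calc ‖T.eval y * Real.exp (-y^2 + c*y) * |y - a| ^ β‖
        = |T.eval y| * Real.exp (-y^2 + c*y) * |y - a| ^ β := by
          rw [norm_eq_abs, abs_mul, abs_mul, abs_of_nonneg (Real.exp_pos _).le,
            abs_of_nonneg (Real.rpow_nonneg (abs_nonneg _) _)]
      _ ≤ (K * (1 + (y - a) ^ 2) ^ d) * (E * Real.exp (-(1/2) * (y - a)^2)) * |y - a| ^ β := by
          gcongr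
      _ = (K * E) * ((1 + (y - a) ^ 2) ^ d * (|y - a| ^ β * Real.exp (-(1/2) * (y - a) ^ 2))) := by
          ring


lemma helper_tendsto (c a β : ℝ) (hβ : 0 ≤ β) (T : Polynomial ℝ) :
    Tendsto (fun y : ℝ => T.eval y * Real.exp (-y^2 + c*y) * |y - a| ^ β) atTop (𝓝 0) := by
  obtain ⟨K, hK0, hK⟩ := poly_bound T
  set m : ℕ := ⌈β⌉₊ with hm
  set N : ℕ := T.natDegree + m with hN
  rw [tendsto_zero_iff_norm_tendsto_zero]
  apply squeeze_zero' (Eventually.of_forall fun y => norm_nonneg _)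
    (g := fun y : ℝ => (K * (1 + |a|) ^ m * 2 ^ N) * (y ^ (2 * N) * Real.exp (-y)))
  · filter_upwards [eventually_ge_atTop (max (|c| + 1) 1)] with y hy
    have hy1 : (1:ℝ) ≤ y := le_of_max_le_right hy
    have hyc : |c| + 1 ≤ y := le_of_max_le_left hy
    have hy0 : (0:ℝ) ≤ y := by linarith
    have h1y : (1:ℝ) ≤ 1 + y ^ 2 := by nlinarith
    have h1a : (1:ℝ) ≤ (1 + |a|) * (1 + y ^ 2) := by nlinarith [abs_nonneg a]
    have hbase : |y - a| ≤ (1 + |a|) * (1 + y ^ 2) := by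
      have : |y - a| ≤ |y| + |a| := abs_sub _ _
      have hyy : |y| ≤ 1 + y ^ 2 := by
        rw [abs_of_nonneg hy0]; nlinarith
      nlinarith [abs_nonneg a]
    have hr1 : |y - a| ^ β ≤ ((1 + |a|) * (1 + y ^ 2)) ^ β :=
      Real.rpow_le_rpow (abs_nonneg _) hbase hβ
    have hr2 : ((1 + |a|) * (1 + y ^ 2)) ^ β ≤ ((1 + |a|) * (1 + y ^ 2)) ^ (m:ℝ) :=
      Real.rpow_le_rpow_of_exponent_le h1a (Nat.le_ceil β)
    have hr3 : ((1 + |a|) * (1 + y ^ 2)) ^ (m:ℝ) = (1 + |a|) ^ m * (1 + y ^ 2) ^ m := by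
      rw [Real.rpow_natCast, mul_pow]
    have hexp : Real.exp (-y ^ 2 + c * y) ≤ Real.exp (-y) := by
      apply Real.exp_le_exp.mpr
      nlinarith [le_abs_self c]
    have hpoly : (1 + y ^ 2 : ℝ) ^ N ≤ 2 ^ N * y ^ (2 * N) := by
      calc (1 + y ^ 2 : ℝ) ^ N ≤ (2 * y ^ 2) ^ N := by
            apply pow_le_pow_left₀ (by positivity)
            nlinarith
        _ = 2 ^ N * y ^ (2 * N) := by rw [mul_pow, ← pow_mul]
    calc ‖T.eval y * Real.exp (-y^2 + c*y) * |y - a| ^ β‖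
        = |T.eval y| * Real.exp (-y^2 + c*y) * |y - a| ^ β := by
          rw [norm_eq_abs, abs_mul, abs_mul, abs_of_nonneg (Real.exp_pos _).le,
            abs_of_nonneg (Real.rpow_nonneg (abs_nonneg _) _)]
      _ ≤ (K * (1 + y ^ 2) ^ T.natDegree) * Real.exp (-y) *
            ((1 + |a|) ^ m * (1 + y ^ 2) ^ m) := by
          rw [← hr3]
          gcongr
          · exact hK y
          · exact hr1.trans hr2
      _ = (K * (1 + |a|) ^ m) * (1 + y ^ 2) ^ N * Real.exp (-y) := by
          rw [hN, pow_add]; ring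
      _ ≤ (K * (1 + |a|) ^ m) * (2 ^ N * y ^ (2 * N)) * Real.exp (-y) := by
          gcongr
      _ = (K * (1 + |a|) ^ m * 2 ^ N) * (y ^ (2 * N) * Real.exp (-y)) := by ring
  · have := (tendsto_pow_mul_exp_neg_atTop_nhds_zero (2 * N)).const_mul
      (K * (1 + |a|) ^ m * 2 ^ N)
    simpa using this


lemma gen_ftc {γ : ℝ} (hγ : 0 < γ) (c a : ℝ) (S : Polynomial ℝ) :
    ∫ x in Ioi a,
      ((derivative S).eval x * (Real.exp (-x^2 + c*x) * (x - a) ^ γ)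
        + S.eval x * ((c - 2*x) * Real.exp (-x^2 + c*x) * (x - a) ^ γ)
        + S.eval x * Real.exp (-x^2 + c*x) * ((x - a) ^ (γ - 1) * γ)) = 0 := by
  set f : ℝ → ℝ := fun x => S.eval x * Real.exp (-x^2 + c*x) * (x - a) ^ γ with hf
  set g : ℝ → ℝ := fun x =>
      (derivative S).eval x * (Real.exp (-x^2 + c*x) * (x - a) ^ γ)
        + S.eval x * ((c - 2*x) * Real.exp (-x^2 + c*x) * (x - a) ^ γ)
        + S.eval x * Real.exp (-x^2 + c*x) * ((x - a) ^ (γ - 1) * γ) with hg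
  have hcont : ContinuousWithinAt f (Ici a) a := by
    apply ContinuousAt.continuousWithinAt
    have hr : ContinuousAt (fun x : ℝ => (x - a) ^ γ) a := by
      have h2 : ContinuousAt (fun x : ℝ => x - a) a := by fun_prop
      have h1 : ContinuousAt (fun z : ℝ => z ^ γ) 0 :=
        Real.continuousAt_rpow_const 0 γ (Or.inr hγ.le)
      simpa [Function.comp_def] using h1.comp_of_eq h2 (by simp)
    exact ((S.continuous_aeval.continuousAt).mul
      ((by continuity : Continuous fun x : ℝ => Real.exp (-x^2 + c*x)).continuousAt)).mul hr
  have hderiv : ∀ x ∈ Ioi a, HasDerivAt f (g x) x := by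
    intro x hx
    have hxa : x - a ≠ 0 := sub_ne_zero.mpr (ne_of_gt hx)
    have h1 : HasDerivAt (fun x : ℝ => S.eval x) ((derivative S).eval x) x := S.hasDerivAt x
    have hinner : HasDerivAt (fun x : ℝ => -x^2 + c*x) (-(2*x) + c) x := by
      exact ((hasDerivAt_pow 2 x).neg.add ((hasDerivAt_id x).const_mul c)).congr_deriv (by norm_num)
    have h2 : HasDerivAt (fun x : ℝ => Real.exp (-x^2 + c*x))
        (Real.exp (-x^2 + c*x) * (-(2*x) + c)) x := hinner.exp
    have h3 : HasDerivAt (fun x : ℝ => (x - a) ^ γ) (γ * (x - a) ^ (γ - 1)) x := by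
      simpa using ((hasDerivAt_id x).sub_const a).rpow_const (Or.inl hxa)
    have := (h1.mul h2).mul h3
    refine this.congr_deriv ?_
    simp only [hg, Pi.mul_apply]
    ring
  have f'int : IntegrableOn g (Ioi a) := by
    have i1 := master c a γ (by linarith) (derivative S)
    have i2 := master c a γ (by linarith) (S * (Polynomial.C c - 2 * Polynomial.X))
    have i3 := (master c a (γ - 1) (by linarith) S).const_mul γ
    refine (((i1.add i2).add i3).integrableOn).congr_fun ?_ measurableSet_Ioi
    intro x hx
    have hxa : (0:ℝ) < x - a := sub_pos.mpr hx
    simp only [hg, Polynomial.eval_mul, Polynomial.eval_sub, Polynomial.eval_C,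
      Polynomial.eval_mul, Polynomial.eval_ofNat, Polynomial.eval_X, Pi.add_apply,
      abs_of_pos hxa]
    ring
  have hlim : Tendsto f atTop (𝓝 0) := by
    apply (helper_tendsto c a γ hγ.le S).congr'
    filter_upwards [eventually_ge_atTop a] with x hx
    rw [hf]
    simp only [abs_of_nonneg (sub_nonneg.mpr hx)]
  have := integral_Ioi_of_hasDerivAt_of_tendsto hcont hderiv f'int hlim
  rw [this, hf]
  simp [Real.zero_rpow (ne_of_gt hγ)]


section W
variable {t γ A B : ℝ} {w : ℝ → ℝ}
  (hγ : 0 < γ)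
  (hw : ∀ y : ℝ, w y =
      Real.exp (-y ^ 2 + t * y) * |y - t| ^ γ *
        (A + B * (if 0 < y - t then (1 : ℝ) else 0)))

include hγ hw

lemma w_meas : Measurable w := by
  have : w = fun y => Real.exp (-y ^ 2 + t * y) * |y - t| ^ γ *
      (A + B * (if 0 < y - t then (1 : ℝ) else 0)) := funext hw
  rw [this]
  apply Measurable.mul
  · exact ((by continuity : Continuous fun a : ℝ => Real.exp (-a ^ 2 + t * a))).measurable.mul
      (by measurability)
  · apply Measurable.add measurable_const
    apply Measurable.const_mul
    exact Measurable.ite (measurableSet_lt measurable_const (measurable_id.sub_const t))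
      measurable_const measurable_const

lemma w_abs_le (y : ℝ) :
    |w y| ≤ Real.exp (-y ^ 2 + t * y) * |y - t| ^ γ * (|A| + |B|) := by
  rw [hw y, abs_mul, abs_mul, abs_of_nonneg (Real.exp_pos _).le,
    abs_of_nonneg (Real.rpow_nonneg (abs_nonneg _) _)]
  gcongr
  have hite : |(if 0 < y - t then (1:ℝ) else 0)| ≤ 1 := by split <;> norm_num
  calc |A + B * (if 0 < y - t then (1:ℝ) else 0)|
      ≤ |A| + |B * (if 0 < y - t then (1:ℝ) else 0)| := abs_add_le _ _
    _ ≤ |A| + |B| * 1 := by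
        rw [abs_mul]
        gcongr
    _ = |A| + |B| := by ring

lemma W_int1 (R : Polynomial ℝ) : Integrable fun y : ℝ => R.eval y * w y := by
  have hg : Integrable fun y : ℝ =>
      (|A| + |B|) * ‖R.eval y * Real.exp (-y^2 + t*y) * |y - t| ^ γ‖ :=
    (master t t γ (by linarith) R).norm.const_mul _
  refine hg.mono' ?_ ?_
  · exact ((R.continuous_aeval.measurable).mul (w_meas hγ hw)).aestronglyMeasurable
  · filter_upwards with y
    rw [norm_eq_abs, abs_mul, norm_eq_abs, abs_mul, abs_mul,
      abs_of_nonneg (Real.exp_pos _).le, abs_of_nonneg (Real.rpow_nonneg (abs_nonneg _) _)]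
    calc |R.eval y| * |w y|
        ≤ |R.eval y| * (Real.exp (-y ^ 2 + t * y) * |y - t| ^ γ * (|A| + |B|)) :=
          mul_le_mul_of_nonneg_left (w_abs_le hγ hw y) (abs_nonneg _)
      _ = (|A| + |B|) * (|R.eval y| * Real.exp (-y ^ 2 + t * y) * |y - t| ^ γ) := by ring

lemma W_int2 (R : Polynomial ℝ) : Integrable fun y : ℝ => R.eval y * w y / (y - t) := by
  have hg : Integrable fun y : ℝ =>
      (|A| + |B|) * ‖R.eval y * Real.exp (-y^2 + t*y) * |y - t| ^ (γ - 1)‖ :=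
    (master t t (γ - 1) (by linarith) R).norm.const_mul _
  refine hg.mono' ?_ ?_
  · exact (((R.continuous_aeval.measurable).mul (w_meas hγ hw)).div
      (measurable_id.sub_const t)).aestronglyMeasurable
  · filter_upwards with y
    rw [norm_eq_abs, norm_eq_abs, abs_div, abs_mul, abs_mul, abs_mul,
      abs_of_nonneg (Real.exp_pos _).le, abs_of_nonneg (Real.rpow_nonneg (abs_nonneg _) _)]
    rcases eq_or_ne y t with rfl | hyt
    · have : w y = 0 := by
        rw [hw y, sub_self, abs_zero, Real.zero_rpow (ne_of_gt hγ)]; ring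
      rw [this]
      simp only [abs_zero, mul_zero, zero_div]
      positivity
    · have hne : y - t ≠ 0 := sub_ne_zero.mpr hyt
      have habs : |y - t| ≠ 0 := abs_ne_zero.mpr hne
      have key : |y - t| ^ γ / |y - t| = |y - t| ^ (γ - 1) :=
        (Real.rpow_sub_one habs γ).symm
      calc |R.eval y| * |w y| / |y - t|
          ≤ |R.eval y| * (Real.exp (-y ^ 2 + t * y) * |y - t| ^ γ * (|A| + |B|)) / |y - t| := by
            gcongr
            exact w_abs_le hγ hw y
        _ = (|A| + |B|) * (|R.eval y| * Real.exp (-y ^ 2 + t * y) *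
              (|y - t| ^ γ / |y - t|)) := by ring
        _ = (|A| + |B|) * (|R.eval y| * Real.exp (-y ^ 2 + t * y) * |y - t| ^ (γ - 1)) := by
            rw [key]
end W


section W
variable {t γ A B : ℝ} {w : ℝ → ℝ}
  (hγ : 0 < γ)
  (hw : ∀ y : ℝ, w y =
      Real.exp (-y ^ 2 + t * y) * |y - t| ^ γ *
        (A + B * (if 0 < y - t then (1 : ℝ) else 0)))

include hγ hw

lemma W_int2' (R : Polynomial ℝ) :
    Integrable fun y : ℝ => R.eval y * (t - 2 * y) * w y := by
  apply (W_int1 hγ hw (R * (Polynomial.C t - 2 * Polynomial.X))).congr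
  filter_upwards with y
  simp [Polynomial.eval_mul]
  try ring

lemma ibp (R : Polynomial ℝ) :
    ∫ y : ℝ, ((derivative R).eval y * w y + R.eval y * (t - 2 * y) * w y
      + γ * (R.eval y * w y / (y - t))) = 0 := by
  have int1 := W_int1 hγ hw (derivative R)
  have int2 := W_int2' hγ hw R
  have int3 := (W_int2 hγ hw R).const_mul γ
  have hΦ : Integrable (fun y : ℝ => (derivative R).eval y * w y
      + R.eval y * (t - 2 * y) * w y + γ * (R.eval y * w y / (y - t))) :=
    (int1.add int2).add int3
  rw [← intervalIntegral.integral_Iic_add_Ioi hΦ.integrableOn hΦ.integrableOn]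
  have hplus : (∫ y in Ioi t, ((derivative R).eval y * w y
      + R.eval y * (t - 2 * y) * w y + γ * (R.eval y * w y / (y - t)))) = 0 := by
    have e1 : EqOn (fun y : ℝ => (derivative R).eval y * w y
        + R.eval y * (t - 2 * y) * w y + γ * (R.eval y * w y / (y - t)))
        (fun x : ℝ => (A + B) *
          ((derivative R).eval x * (Real.exp (-x^2 + t*x) * (x - t) ^ γ)
          + R.eval x * ((t - 2*x) * Real.exp (-x^2 + t*x) * (x - t) ^ γ)
          + R.eval x * Real.exp (-x^2 + t*x) * ((x - t) ^ (γ - 1) * γ))) (Ioi t) := by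
      intro x hx
      have hxt : (0:ℝ) < x - t := sub_pos.mpr hx
      have hne : x - t ≠ 0 := ne_of_gt hxt
      have hdiv : (x - t) ^ (γ - 1) = (x - t) ^ γ / (x - t) := Real.rpow_sub_one hne γ
      simp only [hw x, abs_of_pos hxt, if_pos hxt, mul_one, hdiv]
      field_simp
    rw [setIntegral_congr_fun measurableSet_Ioi e1, integral_const_mul,
      gen_ftc hγ t t R, mul_zero]
  have hminus : (∫ y in Iic t, ((derivative R).eval y * w y
      + R.eval y * (t - 2 * y) * w y + γ * (R.eval y * w y / (y - t)))) = 0 := by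
    set Φ : ℝ → ℝ := fun y => (derivative R).eval y * w y
      + R.eval y * (t - 2 * y) * w y + γ * (R.eval y * w y / (y - t)) with hΦdef
    have hsub := integral_comp_neg_Iic t (fun z : ℝ => Φ (-z))
    simp only [neg_neg] at hsub
    rw [hsub]
    have e2 : EqOn (fun x : ℝ => Φ (-x))
        (fun x : ℝ => (-A) *
          ((derivative (R.comp (-Polynomial.X))).eval x *
              (Real.exp (-x^2 + (-t)*x) * (x - (-t)) ^ γ)
          + (R.comp (-Polynomial.X)).eval x *
              (((-t) - 2*x) * Real.exp (-x^2 + (-t)*x) * (x - (-t)) ^ γ)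
          + (R.comp (-Polynomial.X)).eval x * Real.exp (-x^2 + (-t)*x) *
              ((x - (-t)) ^ (γ - 1) * γ))) (Ioi (-t)) := by
      intro x hx
      have hxt : (0:ℝ) < x + t := by
        have : -t < x := hx
        linarith
      have hne : x + t ≠ 0 := ne_of_gt hxt
      have hdiv : (x + t) ^ (γ - 1) = (x + t) ^ γ / (x + t) := Real.rpow_sub_one hne γ
      have habs : |(-x : ℝ) - t| = x + t := by
        rw [abs_of_neg (by linarith : (-x : ℝ) - t < 0)]; ring
      have hif : ¬ (0 < (-x : ℝ) - t) := by linarith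
      have hexp : (-(-x:ℝ)^2 + t * (-x)) = -x^2 + (-t)*x := by ring
      simp only [hΦdef, hw (-x), habs, if_neg hif, mul_zero, add_zero, hexp,
        Polynomial.derivative_comp, Polynomial.eval_mul, Polynomial.eval_comp,
        Polynomial.derivative_neg, Polynomial.derivative_X, Polynomial.eval_neg,
        Polynomial.eval_X, Polynomial.eval_one, sub_neg_eq_add, hdiv]
      rw [show (-x - t : ℝ) = -(x + t) by ring]
      rw [div_neg]
      field_simp
      ring
    rw [setIntegral_congr_fun measurableSet_Ioi e2, integral_const_mul,
      gen_ftc hγ (-t) (-t) (R.comp (-Polynomial.X)), mul_zero]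
  rw [hplus, hminus, add_zero]

lemma key_id (R : Polynomial ℝ) :
    γ * ∫ y : ℝ, R.eval y * w y / (y - t)
      = (∫ y : ℝ, R.eval y * (2 * y - t) * w y)
        - ∫ y : ℝ, (derivative R).eval y * w y := by
  have int1 := W_int1 hγ hw (derivative R)
  have int2 := W_int2' hγ hw R
  have int3 := (W_int2 hγ hw R).const_mul γ
  have int12 : Integrable (fun y : ℝ => (derivative R).eval y * w y
      + R.eval y * (t - 2 * y) * w y) := int1.add int2
  have h0 := ibp hγ hw R
  rw [integral_add int12 int3, integral_add int1 int2,
    integral_const_mul] at h0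
  have h2 : (∫ y : ℝ, R.eval y * (t - 2 * y) * w y)
      = - ∫ y : ℝ, R.eval y * (2 * y - t) * w y := by
    rw [← integral_neg]
    congr 1
    funext y
    ring
  rw [h2] at h0
  linarith
end W


section W
variable {t γ A B : ℝ} {w : ℝ → ℝ} {P : ℕ → Polynomial ℝ}
  (hγ : 0 < γ)
  (hw : ∀ y : ℝ, w y =
      Real.exp (-y ^ 2 + t * y) * |y - t| ^ γ *
        (A + B * (if 0 < y - t then (1 : ℝ) else 0)))

variable (hmonic : ∀ n, (P n).Monic) (hdeg : ∀ n, (P n).natDegree = n)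
  (horth : ∀ m n, m ≠ n → ∫ y : ℝ, (P m).eval y * (P n).eval y * w y = 0)

include hγ hw hmonic hdeg horth

lemma orth_lower : ∀ d : ℕ, ∀ Q : Polynomial ℝ, Q.natDegree ≤ d → ∀ n, Q.natDegree < n →
    ∫ y : ℝ, Q.eval y * (P n).eval y * w y = 0 := by
  intro d
  induction d with
  | zero =>
    intro Q hQ0 n hQn
    have hQC : Q = Polynomial.C (Q.coeff 0) := Polynomial.eq_C_of_natDegree_le_zero hQ0
    have hP0 : P 0 = 1 := (hmonic 0).natDegree_eq_zero.mp (hdeg 0)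
    have : (∫ y : ℝ, Q.eval y * (P n).eval y * w y)
        = ∫ y : ℝ, Q.coeff 0 * ((P 0).eval y * (P n).eval y * w y) := by
      congr 1; funext y
      rw [hP0]
      conv_lhs => rw [hQC]
      simp
      ring
    rw [this, integral_const_mul, horth 0 n (by omega), mul_zero]
  | succ d ih =>
    intro Q hQd n hQn
    by_cases hd : Q.natDegree ≤ d
    · exact ih Q hd n (lt_of_le_of_lt (le_refl _) hQn)
    · have hQdeg : Q.natDegree = d + 1 := le_antisymm hQd (by omega)
      have hQ0 : Q ≠ 0 := fun hc => by simp [hc] at hQdeg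
      have hlc : Q.leadingCoeff ≠ 0 := Polynomial.leadingCoeff_ne_zero.mpr hQ0
      set R : Polynomial ℝ := Q - Polynomial.C Q.leadingCoeff * P (d + 1) with hR
      have hPd1 : (P (d + 1)).degree = (d + 1 : ℕ) := by
        rw [Polynomial.degree_eq_natDegree (hmonic (d + 1)).ne_zero, hdeg]
      have hdegQ : Q.degree = (d + 1 : ℕ) := by
        rw [Polynomial.degree_eq_natDegree hQ0, hQdeg]
      have hdeg_eq : Q.degree = (Polynomial.C Q.leadingCoeff * P (d + 1)).degree := by
        rw [Polynomial.degree_C_mul hlc, hPd1, hdegQ]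
      have hlc_eq : Q.leadingCoeff = (Polynomial.C Q.leadingCoeff * P (d + 1)).leadingCoeff := by
        rw [Polynomial.leadingCoeff_mul, Polynomial.leadingCoeff_C, (hmonic (d + 1)).leadingCoeff,
          mul_one]
      have hdegR : R.degree < Q.degree := Polynomial.degree_sub_lt hdeg_eq hQ0 hlc_eq
      have hRd : R.natDegree ≤ d := by
        rcases eq_or_ne R 0 with h0 | h0
        · simp [h0]
        · have := Polynomial.natDegree_lt_natDegree h0 hdegR
          omega
      have hsplit : ∀ y : ℝ, Q.eval y * (P n).eval y * w y
          = Q.leadingCoeff * ((P (d+1)).eval y * (P n).eval y * w y)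
            + (R * P n).eval y * w y := by
        intro y
        have : Q = Polynomial.C Q.leadingCoeff * P (d + 1) + R := by rw [hR]; ring
        conv_lhs => rw [this]
        simp [Polynomial.eval_mul]
        ring
      have int1 : Integrable (fun y : ℝ =>
          Q.leadingCoeff * ((P (d+1)).eval y * (P n).eval y * w y)) := by
        apply Integrable.const_mul
        apply (W_int1 hγ hw (P (d+1) * P n)).congr
        filter_upwards with y
        simp [Polynomial.eval_mul]
      have int2 : Integrable (fun y : ℝ => (R * P n).eval y * w y) := W_int1 hγ hw _
      calc ∫ y : ℝ, Q.eval y * (P n).eval y * w y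
          = ∫ y : ℝ, (Q.leadingCoeff * ((P (d+1)).eval y * (P n).eval y * w y)
              + (R * P n).eval y * w y) := by
            congr 1; funext y; exact hsplit y
        _ = Q.leadingCoeff * (∫ y : ℝ, (P (d+1)).eval y * (P n).eval y * w y)
              + ∫ y : ℝ, (R * P n).eval y * w y := by
            rw [integral_add int1 int2, integral_const_mul]
        _ = 0 := by
            rw [horth (d+1) n (by omega)]
            have : (∫ y : ℝ, (R * P n).eval y * w y)
                = ∫ y : ℝ, R.eval y * (P n).eval y * w y := by
              congr 1; funext y; simp [Polynomial.eval_mul]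
            rw [this, ih R hRd n (by omega)]
            ring
end W


end Aux
/-- Two integral identities from integration by parts for the deformed Hermite weight with one jump, with v0'(y) = 2y - t. -/
theorem integral_identities
    (t γ A B : ℝ) (hγ : 0 < γ) (hA : 0 ≤ A) (hAB : 0 ≤ A + B)
    (hABpos : 0 < A ∨ 0 < A + B)
    (w : ℝ → ℝ)
    (hw : ∀ y : ℝ, w y =
      Real.exp (-y ^ 2 + t * y) * |y - t| ^ γ *
        (A + B * (if 0 < y - t then (1 : ℝ) else 0)))
    (P : ℕ → Polynomial ℝ)
    (hmonic : ∀ n, (P n).Monic)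
    (hdeg : ∀ n, (P n).natDegree = n)
    (horth : ∀ m n, m ≠ n →
      ∫ y : ℝ, (P m).eval y * (P n).eval y * w y = 0)
    (h : ℕ → ℝ)
    (hh : ∀ n, h n = ∫ y : ℝ, ((P n).eval y) ^ 2 * w y)
    (hhpos : ∀ n, 0 < h n) :
    ∀ n : ℕ, 1 ≤ n →
      (γ * ∫ y : ℝ, ((P n).eval y) ^ 2 * w y / (y - t)
        = ∫ y : ℝ, ((P n).eval y) ^ 2 * (2 * y - t) * w y) ∧
      (γ * ∫ y : ℝ, (P n).eval y * (P (n - 1)).eval y * w y / (y - t)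
        = (∫ y : ℝ, (P n).eval y * (P (n - 1)).eval y * (2 * y - t) * w y)
          - n * h (n - 1)) := by
  intro n hn
  have horthlow := orth_lower hγ hw hmonic hdeg horth
  -- degree facts
  have hderiv_deg : ∀ m : ℕ, (derivative (P m)).natDegree ≤ m - 1 := fun m => by
    have := Polynomial.natDegree_derivative_le (P m)
    rwa [hdeg m] at this
  constructor
  · -- Part (i)
    have hkey := key_id hγ hw (P n * P n)
    have hder0 : (∫ y : ℝ, (derivative (P n * P n)).eval y * w y) = 0 := by
      have e : (fun y : ℝ => (derivative (P n * P n)).eval y * w y)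
          = fun y : ℝ => 2 * ((derivative (P n)).eval y * (P n).eval y * w y) := by
        funext y
        rw [Polynomial.derivative_mul]
        simp [Polynomial.eval_mul]
        ring
      rw [e, integral_const_mul,
        horthlow (derivative (P n)).natDegree (derivative (P n)) le_rfl n
          (by have := hderiv_deg n; omega), mul_zero]
    have e1 : (∫ y : ℝ, ((P n).eval y) ^ 2 * w y / (y - t))
        = ∫ y : ℝ, (P n * P n).eval y * w y / (y - t) := by
      congr 1; funext y; simp [Polynomial.eval_mul, sq]
    have e2 : (∫ y : ℝ, ((P n).eval y) ^ 2 * (2 * y - t) * w y)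
        = ∫ y : ℝ, (P n * P n).eval y * (2 * y - t) * w y := by
      congr 1; funext y; simp [Polynomial.eval_mul, sq]
    rw [e1, e2, hkey, hder0, sub_zero]
  · -- Part (ii)
    have hkey := key_id hγ hw (P n * P (n - 1))
    set E : Polynomial ℝ := derivative (P n) - Polynomial.C (n : ℝ) * P (n - 1) with hE
    have hcoefPn : (P n).coeff n = 1 := by
      have := (hmonic n).coeff_natDegree; rwa [hdeg n] at this
    have hcoefPn1 : (P (n - 1)).coeff (n - 1) = 1 := by
      have := (hmonic (n - 1)).coeff_natDegree; rwa [hdeg (n - 1)] at this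
    have hidx : n - 1 + 1 = n := Nat.succ_pred_eq_of_pos hn
    have hEcoeff : E.coeff (n - 1) = 0 := by
      rw [hE, Polynomial.coeff_sub, Polynomial.coeff_derivative, hidx,
        Polynomial.coeff_C_mul, hcoefPn, hcoefPn1, one_mul, mul_one, sub_eq_zero]
      exact_mod_cast (congrArg (Nat.cast : ℕ → ℝ) hidx)
    have hEdeg : E.natDegree ≤ n - 1 := by
      refine (Polynomial.natDegree_sub_le _ _).trans (max_le (hderiv_deg n) ?_)
      rw [Polynomial.natDegree_C_mul (Nat.cast_ne_zero.mpr (by omega) : (n : ℝ) ≠ 0), hdeg]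
    have hEint : (∫ y : ℝ, (E * P (n - 1)).eval y * w y) = 0 := by
      rcases eq_or_ne E 0 with h0 | h0
      · simp [h0]
      · have hne : E.natDegree ≠ n - 1 := fun hEq =>
          (Polynomial.leadingCoeff_ne_zero.mpr h0) (by rwa [Polynomial.leadingCoeff, hEq])
        have e : (∫ y : ℝ, (E * P (n - 1)).eval y * w y)
            = ∫ y : ℝ, E.eval y * (P (n - 1)).eval y * w y := by
          congr 1; funext y; simp [Polynomial.eval_mul]
        rw [e]
        exact horthlow E.natDegree E le_rfl (n - 1) (by omega)
    have hfirst : (∫ y : ℝ, (derivative (P n) * P (n - 1)).eval y * w y)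
        = (n : ℝ) * h (n - 1) := by
      have e : (fun y : ℝ => (derivative (P n) * P (n - 1)).eval y * w y)
          = fun y : ℝ => (n : ℝ) * ((P (n-1)).eval y * (P (n-1)).eval y * w y)
              + (E * P (n - 1)).eval y * w y := by
        funext y
        have hPd : derivative (P n) = Polynomial.C (n : ℝ) * P (n - 1) + E := by
          rw [hE]; ring
        rw [hPd]
        simp only [Polynomial.eval_mul, Polynomial.eval_add, Polynomial.eval_C]
        ring
      have i1 : Integrable (fun y : ℝ =>
          (n : ℝ) * ((P (n-1)).eval y * (P (n-1)).eval y * w y)) := by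
        apply Integrable.const_mul
        apply (W_int1 hγ hw (P (n-1) * P (n-1))).congr
        filter_upwards with y
        simp [Polynomial.eval_mul]
      have i2 : Integrable (fun y : ℝ => (E * P (n - 1)).eval y * w y) := W_int1 hγ hw _
      rw [e, integral_add i1 i2, integral_const_mul, hEint, add_zero]
      have : (∫ y : ℝ, (P (n-1)).eval y * (P (n-1)).eval y * w y)
          = ∫ y : ℝ, ((P (n-1)).eval y) ^ 2 * w y := by
        congr 1; funext y; rw [sq]
      rw [this, ← hh]
    have hsecond : (∫ y : ℝ, (P n * derivative (P (n - 1))).eval y * w y) = 0 := by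
      have e : (∫ y : ℝ, (P n * derivative (P (n - 1))).eval y * w y)
          = ∫ y : ℝ, (derivative (P (n - 1))).eval y * (P n).eval y * w y := by
        congr 1; funext y; rw [Polynomial.eval_mul]; ring
      rw [e]
      exact horthlow _ _ le_rfl n (by have := hderiv_deg (n - 1); omega)
    have hder1 : (∫ y : ℝ, (derivative (P n * P (n - 1))).eval y * w y)
        = (n : ℝ) * h (n - 1) := by
      have e : (fun y : ℝ => (derivative (P n * P (n - 1))).eval y * w y)
          = fun y : ℝ => (derivative (P n) * P (n - 1)).eval y * w y
              + (P n * derivative (P (n - 1))).eval y * w y := by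
        funext y
        rw [Polynomial.derivative_mul]
        simp [Polynomial.eval_mul]
        ring
      rw [e, integral_add (W_int1 hγ hw _) (W_int1 hγ hw _), hfirst, hsecond, add_zero]
    have e1 : (∫ y : ℝ, (P n).eval y * (P (n - 1)).eval y * w y / (y - t))
        = ∫ y : ℝ, (P n * P (n - 1)).eval y * w y / (y - t) := by
      congr 1; funext y; simp [Polynomial.eval_mul]
    have e2 : (∫ y : ℝ, (P n).eval y * (P (n - 1)).eval y * (2 * y - t) * w y)
        = ∫ y : ℝ, (P n * P (n - 1)).eval y * (2 * y - t) * w y := by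
      congr 1; funext y; simp [Polynomial.eval_mul]
    rw [e1, e2, hkey, hder1]
end

section
/- Compatibility condition (S₂): for every integer n ≥ 0 and every z ∈ ℂ with nonzero imaginary part, 1 + (z − α_n)(B_{n+1}(z) − B_n(z)) = β_{n+1} A_{n+1}(z) − β_n A_{n−1}(z) (using the conventions B_0(z) = 0 and β_0 A_{−1}(z) = 0 when n = 0). -/
open MeasureTheory Polynomial

section S2Aux
open Real Set Filter

lemma S2_int_abs_rpow_exp {b s : ℝ} (hb : 0 < b) (hs : -1 < s) :
    Integrable fun x : ℝ => |x| ^ s * Real.exp (-b * x ^ 2) := by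
  have hmeas : Measurable fun x : ℝ => |x| ^ s * Real.exp (-b * x ^ 2) := by fun_prop
  rw [← integrableOn_univ, ← @Iio_union_Ici _ _ (0 : ℝ), integrableOn_union,
    integrableOn_Ici_iff_integrableOn_Ioi]
  have hIoi : IntegrableOn (fun x : ℝ => |x| ^ s * Real.exp (-b * x ^ 2)) (Ioi 0) := by
    refine (integrableOn_rpow_mul_exp_neg_mul_sq hb hs).congr_fun ?_ measurableSet_Ioi
    intro x hx
    simp only [mem_Ioi] at hx
    dsimp only
    rw [abs_of_pos hx]
  refine ⟨?_, hIoi⟩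
  rw [← (Measure.measurePreserving_neg (volume : Measure ℝ)).integrableOn_comp_preimage
      (Homeomorph.neg ℝ).measurableEmbedding]
  simp only [Function.comp_def, neg_sq, neg_preimage, neg_Iio, neg_neg, neg_zero, abs_neg]
  exact hIoi

lemma S2_master (t : ℝ) (k : ℕ) {s : ℝ} (hs : -1 < s) :
    Integrable fun y : ℝ => |y| ^ k * (Real.exp (-y ^ 2 + t * y) * |y - t| ^ s) := by
  set g : ℝ → ℝ := fun x => |x + t| ^ k * (Real.exp (-x ^ 2 - t * x) * |x| ^ s) with hg
  have hgint : Integrable g := by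
    have hks : -1 < (k : ℝ) + s := by
      have : (0:ℝ) ≤ (k:ℝ) := Nat.cast_nonneg k
      linarith
    have hb2 : (0:ℝ) < 1/2 := by norm_num
    set C : ℝ := 2 ^ k * Real.exp (t ^ 2 / 2) with hC
    have hCpos : 0 < C := by positivity
    have hbound : Integrable (fun x : ℝ =>
        C * |t| ^ k * (|x| ^ s * Real.exp (-(1/2) * x ^ 2))
        + C * (|x| ^ ((k:ℝ) + s) * Real.exp (-(1/2) * x ^ 2))) :=
      ((S2_int_abs_rpow_exp hb2 hs).const_mul _).add
        ((S2_int_abs_rpow_exp hb2 hks).const_mul _)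
    refine Integrable.mono' hbound ?_ (Filter.Eventually.of_forall fun x => ?_)
    · apply Measurable.aestronglyMeasurable; fun_prop
    · have hgnn : 0 ≤ g x := by
        have := Real.rpow_nonneg (abs_nonneg x) s
        positivity
      rw [Real.norm_eq_abs, abs_of_nonneg hgnn]
      have hE : Real.exp (-x ^ 2 - t * x) ≤ Real.exp (t ^ 2 / 2) * Real.exp (-(1/2) * x ^ 2) := by
        rw [← Real.exp_add]
        apply Real.exp_le_exp.2
        nlinarith [sq_nonneg (x + t)]
      have hA : |x + t| ^ k ≤ 2 ^ k * (|x| ^ k + |t| ^ k) := by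
        calc |x + t| ^ k ≤ (|x| + |t|) ^ k :=
              pow_le_pow_left₀ (abs_nonneg _) (abs_add_le x t) k
          _ ≤ 2 ^ (k - 1) * (|x| ^ k + |t| ^ k) := add_pow_le (abs_nonneg _) (abs_nonneg _) k
          _ ≤ 2 ^ k * (|x| ^ k + |t| ^ k) := by
              apply mul_le_mul_of_nonneg_right
              · exact pow_le_pow_right₀ (by norm_num) (Nat.sub_le k 1)
              · positivity
      have hxs : (0:ℝ) ≤ |x| ^ s := Real.rpow_nonneg (abs_nonneg x) s
      have hmix : |x| ^ k * |x| ^ s ≤ |x| ^ ((k:ℝ) + s) := by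
        rcases eq_or_ne x 0 with rfl | hx
        · rcases Nat.eq_zero_or_pos k with rfl | hk
          · simp
          · simp only [abs_zero, zero_pow hk.ne']
            rw [zero_mul]
            exact Real.rpow_nonneg le_rfl _
        · have hx0 : 0 < |x| := abs_pos.2 hx
          rw [Real.rpow_add hx0, Real.rpow_natCast]
      have hg1 : g x = |x + t| ^ k * (Real.exp (-x ^ 2 - t * x) * |x| ^ s) := rfl
      rw [hg1]
      have e1 : |x + t| ^ k * (Real.exp (-x ^ 2 - t * x) * |x| ^ s)
          ≤ (2 ^ k * (|x| ^ k + |t| ^ k)) * ((Real.exp (t ^ 2 / 2) * Real.exp (-(1/2) * x ^ 2)) * |x| ^ s) := by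
        apply mul_le_mul hA _ (by positivity) (by positivity)
        exact mul_le_mul_of_nonneg_right hE hxs
      refine e1.trans ?_
      have e2 : (2 ^ k * (|x| ^ k + |t| ^ k)) * ((Real.exp (t ^ 2 / 2) * Real.exp (-(1/2) * x ^ 2)) * |x| ^ s)
          = C * |t| ^ k * (|x| ^ s * Real.exp (-(1/2) * x ^ 2))
            + C * ((|x| ^ k * |x| ^ s) * Real.exp (-(1/2) * x ^ 2)) := by
        rw [hC]; ring
      rw [e2]
      have : C * ((|x| ^ k * |x| ^ s) * Real.exp (-(1/2) * x ^ 2))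
          ≤ C * (|x| ^ ((k:ℝ) + s) * Real.exp (-(1/2) * x ^ 2)) := by
        apply mul_le_mul_of_nonneg_left _ hCpos.le
        exact mul_le_mul_of_nonneg_right hmix (Real.exp_pos _).le
      linarith
  have : (fun y : ℝ => |y| ^ k * (Real.exp (-y ^ 2 + t * y) * |y - t| ^ s))
      = fun y => g (y - t) := by
    funext y
    simp only [hg, sub_add_cancel]
    ring_nf
  rw [this]
  exact hgint.comp_sub_right t

open Polynomial in
lemma S2_eval_abs_le (p : ℝ[X]) (y : ℝ) :
    |p.eval y| ≤ ∑ i ∈ Finset.range (p.natDegree + 1), |p.coeff i| * |y| ^ i := by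
  rw [Polynomial.eval_eq_sum_range]
  refine (Finset.abs_sum_le_sum_abs _ _).trans ?_
  apply Finset.sum_le_sum
  intro i _
  rw [abs_mul, abs_pow]

open Polynomial in
lemma S2_poly_int (t : ℝ) {s C : ℝ} (hs : -1 < s) (u : ℝ → ℝ)
    (hum : AEStronglyMeasurable u volume)
    (hub : ∀ y, |u y| ≤ C * (Real.exp (-y ^ 2 + t * y) * |y - t| ^ s)) (p : ℝ[X]) :
    Integrable fun y : ℝ => p.eval y * u y := by
  have hbound : Integrable (fun y : ℝ => ∑ i ∈ Finset.range (p.natDegree + 1),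
      (|p.coeff i| * C) * (|y| ^ i * (Real.exp (-y ^ 2 + t * y) * |y - t| ^ s))) := by
    apply integrable_finset_sum
    intro i _
    exact (S2_master t i hs).const_mul _
  refine Integrable.mono' hbound ((Polynomial.continuous p).aestronglyMeasurable.mul hum)
    (Filter.Eventually.of_forall fun y => ?_)
  rw [Real.norm_eq_abs, abs_mul]
  have h1 : |p.eval y| * |u y| ≤ (∑ i ∈ Finset.range (p.natDegree + 1), |p.coeff i| * |y| ^ i) * |u y| :=
    mul_le_mul_of_nonneg_right (S2_eval_abs_le p y) (abs_nonneg _)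
  refine h1.trans ?_
  rw [Finset.sum_mul]
  apply Finset.sum_le_sum
  intro i _
  have h2 : |p.coeff i| * |y| ^ i * |u y| ≤ |p.coeff i| * |y| ^ i * (C * (Real.exp (-y ^ 2 + t * y) * |y - t| ^ s)) :=
    mul_le_mul_of_nonneg_left (hub y) (by positivity)
  refine h2.trans_eq ?_
  ring

open Polynomial in
lemma S2_proj {w : ℝ → ℝ} {P : ℕ → ℝ[X]} {h : ℕ → ℝ}
    (hmonic : ∀ n, (P n).Monic) (hdeg : ∀ n, (P n).natDegree = n)
    (horth : ∀ m n, m ≠ n → ∫ y : ℝ, (P m).eval y * (P n).eval y * w y = 0)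
    (hh : ∀ n, h n = ∫ y : ℝ, ((P n).eval y) ^ 2 * w y)
    (intPW : ∀ p : ℝ[X], Integrable fun y : ℝ => p.eval y * w y)
    (q : ℝ[X]) (n : ℕ) (hqn : q.natDegree ≤ n) :
    ∫ y : ℝ, (q * P n).eval y * w y = q.coeff n * h n := by
  have hPP : ∀ m k, ∫ y : ℝ, (P m * P k).eval y * w y = if m = k then h k else 0 := by
    intro m k
    by_cases hmk : m = k
    · subst hmk
      simp only [if_pos rfl, hh m]
      congr 1; funext y; simp only [Polynomial.eval_mul]; ring
    · rw [if_neg hmk, ← horth m k hmk]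
      congr 1; funext y; simp [Polynomial.eval_mul]
  have hP0 : P 0 = 1 := by
    have := hdeg 0
    exact (hmonic 0).natDegree_eq_zero.mp this
  -- main induction
  suffices key : ∀ d : ℕ, ∀ q : ℝ[X], q.natDegree ≤ d → ∀ n : ℕ, d ≤ n →
      ∫ y : ℝ, (q * P n).eval y * w y = q.coeff n * h n by
    exact key n q hqn n le_rfl
  intro d
  induction d with
  | zero =>
    intro q hq n hn
    obtain ⟨a, rfl⟩ : ∃ a, q = C a := ⟨q.coeff 0, Polynomial.eq_C_of_natDegree_le_zero hq⟩
    have e1 : (fun y : ℝ => (C a * P n).eval y * w y)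
        = fun y : ℝ => a * ((P 0 * P n).eval y * w y) := by
      funext y; simp [hP0, Polynomial.eval_mul]; ring
    rw [e1, MeasureTheory.integral_const_mul, hPP 0 n]
    rcases Nat.eq_zero_or_pos n with rfl | hnpos
    · simp
    · rw [if_neg (by omega : ¬ (0:ℕ) = n), Polynomial.coeff_C, if_neg hnpos.ne']
      ring
  | succ d ih =>
    intro q hq n hn
    set a := q.coeff (d + 1) with ha
    set r := q - C a * P (d + 1) with hrdef
    have hcoeffP : (P (d + 1)).coeff (d + 1) = 1 := by
      have := (hmonic (d + 1)).coeff_natDegree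
      rwa [hdeg (d + 1)] at this
    have hr : r.natDegree ≤ d := by
      rw [Polynomial.natDegree_le_iff_coeff_eq_zero]
      intro m hm
      rw [hrdef, Polynomial.coeff_sub, Polynomial.coeff_C_mul]
      rcases eq_or_lt_of_le (Nat.succ_le_of_lt hm) with hm1 | hm1
      · rw [← hm1, hcoeffP, mul_one, ha, sub_self]
      · rw [Polynomial.coeff_eq_zero_of_natDegree_lt (lt_of_le_of_lt hq hm1),
          Polynomial.coeff_eq_zero_of_natDegree_lt (by rw [hdeg]; exact hm1),
          mul_zero, sub_zero]
    have hqr : q = r + C a * P (d + 1) := by rw [hrdef]; ring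
    have e1 : (fun y : ℝ => (q * P n).eval y * w y)
        = fun y : ℝ => (r * P n).eval y * w y + a * ((P (d + 1) * P n).eval y * w y) := by
      funext y
      conv_lhs => rw [hqr]
      simp [Polynomial.eval_mul, Polynomial.eval_add]
      ring
    rw [e1, MeasureTheory.integral_add (intPW (r * P n))
      (((intPW (P (d + 1) * P n)).const_mul a)), MeasureTheory.integral_const_mul,
      ih r hr n (le_trans (Nat.le_succ d) hn), hPP (d + 1) n]
    have hqc : q.coeff n = r.coeff n + a * (P (d + 1)).coeff n := by
      rw [hqr, Polynomial.coeff_add, Polynomial.coeff_C_mul]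
    rcases eq_or_lt_of_le hn with h1 | h1
    · rw [if_pos h1, hqc, ← h1, hcoeffP]; ring
    · have hc0 : (P (d + 1)).coeff n = 0 :=
        Polynomial.coeff_eq_zero_of_natDegree_lt (by rw [hdeg]; exact h1)
      rw [if_neg h1.ne, hqc, hc0]; ring

open Polynomial in
lemma S2_rec {w : ℝ → ℝ} {P : ℕ → ℝ[X]} {h : ℕ → ℝ} {α β : ℕ → ℝ}
    (hmonic : ∀ n, (P n).Monic) (hdeg : ∀ n, (P n).natDegree = n)
    (horth : ∀ m n, m ≠ n → ∫ y : ℝ, (P m).eval y * (P n).eval y * w y = 0)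
    (hh : ∀ n, h n = ∫ y : ℝ, ((P n).eval y) ^ 2 * w y)
    (hhpos : ∀ n, 0 < h n)
    (hα : ∀ n, α n = (∫ y : ℝ, y * ((P n).eval y) ^ 2 * w y) / h n)
    (hβ : ∀ n, 1 ≤ n → β n = h n / h (n - 1)) (hβ0 : β 0 = 0)
    (intPW : ∀ p : ℝ[X], Integrable fun y : ℝ => p.eval y * w y)
    (n : ℕ) :
    X * P n = P (n + 1) + C (α n) * P n + C (β n) * P (n - 1) := by
  have hPP : ∀ m k, ∫ y : ℝ, (P m * P k).eval y * w y = if m = k then h k else 0 := by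
    intro m k
    by_cases hmk : m = k
    · subst hmk
      simp only [if_pos rfl, hh m]
      congr 1; funext y; simp only [Polynomial.eval_mul]; ring
    · rw [if_neg hmk, ← horth m k hmk]
      congr 1; funext y; simp only [Polynomial.eval_mul]
  set Q : ℝ[X] := X * P n - P (n + 1) - C (α n) * P n - C (β n) * P (n - 1) with hQ
  have hdQ1 : (X * P n - P (n + 1)).natDegree ≤ n := by
    rw [Polynomial.natDegree_le_iff_coeff_eq_zero]
    intro m hm
    rcases m with _ | k
    · omega
    rw [Polynomial.coeff_sub, Polynomial.coeff_X_mul]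
    rcases eq_or_lt_of_le (Nat.succ_le_of_lt hm) with h1 | h1
    · have e1 : (P n).coeff k = 1 := by
        have := (hmonic n).coeff_natDegree
        rw [hdeg n] at this
        rwa [(by omega : k = n)]
      have e2 : (P (n + 1)).coeff (k + 1) = 1 := by
        have := (hmonic (n + 1)).coeff_natDegree
        rw [hdeg (n + 1)] at this
        rwa [(by omega : k + 1 = n + 1)]
      rw [e1, e2, sub_self]
    · rw [Polynomial.coeff_eq_zero_of_natDegree_lt (by rw [hdeg]; omega),
        Polynomial.coeff_eq_zero_of_natDegree_lt (by rw [hdeg]; omega), sub_self]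
  have hdQ : Q.natDegree ≤ n := by
    refine le_trans (Polynomial.natDegree_sub_le _ _) (max_le (le_trans (Polynomial.natDegree_sub_le _ _) (max_le hdQ1 ?_)) ?_)
    · exact le_trans (Polynomial.natDegree_C_mul_le _ _) (le_of_eq (hdeg n))
    · exact le_trans (Polynomial.natDegree_C_mul_le _ _) (by rw [hdeg]; omega)
  have hzero : ∀ k, k ≤ n → ∫ y : ℝ, (Q * P k).eval y * w y = 0 := by
    intro k hk
    have e : (fun y : ℝ => (Q * P k).eval y * w y)
        = fun y : ℝ => ((X * P n * P k).eval y * w y - (P (n + 1) * P k).eval y * w y)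
          - α n * ((P n * P k).eval y * w y) - β n * ((P (n - 1) * P k).eval y * w y) := by
      funext y
      simp only [hQ, Polynomial.eval_mul, Polynomial.eval_sub, Polynomial.eval_C,
        Polynomial.eval_X]
      ring
    have iA : Integrable (fun y : ℝ => (X * P n * P k).eval y * w y) := intPW _
    have iB : Integrable (fun y : ℝ => (P (n + 1) * P k).eval y * w y) := intPW _
    have iC : Integrable (fun y : ℝ => α n * ((P n * P k).eval y * w y)) :=
      (intPW _).const_mul _
    have iD : Integrable (fun y : ℝ => β n * ((P (n - 1) * P k).eval y * w y)) :=
      (intPW _).const_mul _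
    have iAB : Integrable (fun y : ℝ => (X * P n * P k).eval y * w y
        - (P (n + 1) * P k).eval y * w y) := iA.sub iB
    have iABC : Integrable (fun y : ℝ => (X * P n * P k).eval y * w y
        - (P (n + 1) * P k).eval y * w y - α n * ((P n * P k).eval y * w y)) := iAB.sub iC
    rw [e, MeasureTheory.integral_sub iABC iD,
      MeasureTheory.integral_sub iAB iC, MeasureTheory.integral_sub iA iB,
      MeasureTheory.integral_const_mul, MeasureTheory.integral_const_mul,
      hPP (n + 1) k, hPP n k, hPP (n - 1) k]
    by_cases hk1 : k = n
    · subst hk1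
      have hI1 : ∫ y : ℝ, (X * P k * P k).eval y * w y = α k * h k := by
        have e2 : (fun y : ℝ => (X * P k * P k).eval y * w y)
            = fun y : ℝ => y * ((P k).eval y) ^ 2 * w y := by
          funext y
          simp only [Polynomial.eval_mul, Polynomial.eval_X]; ring
        rw [e2, hα k, div_mul_cancel₀ _ (hhpos k).ne']
      rw [hI1, if_neg (by omega : ¬ k + 1 = k), if_pos rfl]
      rcases Nat.eq_zero_or_pos k with rfl | hkpos
      · simp [hβ0]
      · rw [if_neg (by omega : ¬ k - 1 = k)]
        ring
    · -- k < n, so n = m + 1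
      have hkn : k < n := lt_of_le_of_ne hk hk1
      obtain ⟨m, rfl⟩ : ∃ m, n = m + 1 := ⟨n - 1, by omega⟩
      have hI1 : ∫ y : ℝ, (X * P (m + 1) * P k).eval y * w y
          = (if k = m then h (m + 1) else 0) := by
        have e2 : X * P (m + 1) * P k = X * P k * P (m + 1) := by ring
        rw [e2, S2_proj hmonic hdeg horth hh intPW (X * P k) (m + 1)
          (le_trans Polynomial.natDegree_mul_le (by simp [Polynomial.natDegree_X, hdeg]; omega))]
        rw [Polynomial.coeff_X_mul]
        by_cases hkm : k = m
        · subst hkm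
          have hco : (P k).coeff k = 1 := by
            have := (hmonic k).coeff_natDegree
            rwa [hdeg k] at this
          rw [if_pos rfl, hco, one_mul]
        · rw [if_neg hkm, Polynomial.coeff_eq_zero_of_natDegree_lt (by rw [hdeg]; omega),
            zero_mul]
      rw [hI1]
      by_cases hkm : k = m
      · subst hkm
        rw [if_pos rfl, if_neg (by omega : ¬ k + 1 + 1 = k), if_neg (by omega : ¬ k + 1 = k),
          if_pos (by omega : k + 1 - 1 = k), hβ (k + 1) (by omega),
          (by omega : k + 1 - 1 = k)]
        rw [div_mul_eq_mul_div, mul_div_assoc, div_self (hhpos k).ne', mul_one]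
        ring
      · rw [if_neg hkm, if_neg (by omega : ¬ m + 1 + 1 = k), if_neg (by omega : ¬ m + 1 = k),
          if_neg (by omega : ¬ m + 1 - 1 = k)]
        ring
  -- now Q = 0
  have hQzero : Q = 0 := by
    by_contra hQ0
    have hd := S2_proj hmonic hdeg horth hh intPW Q Q.natDegree le_rfl
    rw [hzero Q.natDegree (le_trans (le_refl _) hdQ)] at hd
    have : Q.coeff Q.natDegree ≠ 0 := by
      rw [← Polynomial.leadingCoeff]
      exact Polynomial.leadingCoeff_ne_zero.mpr hQ0
    have := (hhpos Q.natDegree).ne'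
    rcases mul_eq_zero.mp hd.symm with hc | hc
    · exact ‹Q.coeff Q.natDegree ≠ 0› hc
    · exact this hc
  rw [hQ] at hQzero
  linear_combination hQzero

open Polynomial Filter in
lemma S2_ftc (t γ A B : ℝ) (hγ : 0 < γ) {w : ℝ → ℝ}
    (hw : ∀ y : ℝ, w y = Real.exp (-y ^ 2 + t * y) * |y - t| ^ γ *
        (A + B * (if 0 < y - t then (1 : ℝ) else 0)))
    (intPW : ∀ p : ℝ[X], Integrable fun y : ℝ => p.eval y * w y)
    (intPWt : ∀ p : ℝ[X], Integrable fun y : ℝ => p.eval y * w y / (y - t))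
    (p : ℝ[X]) :
    (∫ y : ℝ, (p.derivative + p * (C t - 2 * X)).eval y * w y)
      + γ * ∫ y : ℝ, p.eval y * w y / (y - t) = 0 := by
  set CB : ℝ := |A| + |B| with hCB
  have hCBnn : 0 ≤ CB := by positivity
  have hwb : ∀ y : ℝ, |w y| ≤ CB * (Real.exp (-y ^ 2 + t * y) * |y - t| ^ γ) := by
    intro y
    rw [hw y, abs_mul, abs_mul, abs_of_nonneg (Real.exp_pos _).le,
      abs_of_nonneg (Real.rpow_nonneg (abs_nonneg _) _)]
    have : |A + B * (if 0 < y - t then (1 : ℝ) else 0)| ≤ CB := by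
      split_ifs with hif
      · rw [mul_one]; exact (abs_add_le _ _).trans (by rw [hCB])
      · rw [mul_zero, add_zero, hCB]; nlinarith [abs_nonneg B]
    calc Real.exp (-y ^ 2 + t * y) * |y - t| ^ γ * |A + B * (if 0 < y - t then (1:ℝ) else 0)|
        ≤ Real.exp (-y ^ 2 + t * y) * |y - t| ^ γ * CB := by
          apply mul_le_mul_of_nonneg_left this (by positivity)
      _ = CB * (Real.exp (-y ^ 2 + t * y) * |y - t| ^ γ) := by ring
  have hwt : w t = 0 := by
    rw [hw t]
    simp [Real.zero_rpow hγ.ne']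
  have hwpos : ∀ y : ℝ, t < y →
      w y = (A + B) * (Real.exp (-y ^ 2 + t * y) * (y - t) ^ γ) := by
    intro y hy
    rw [hw y, if_pos (sub_pos.2 hy), abs_of_pos (sub_pos.2 hy)]
    ring
  have hwneg : ∀ y : ℝ, y < t →
      w y = A * (Real.exp (-y ^ 2 + t * y) * (t - y) ^ γ) := by
    intro y hy
    rw [hw y, if_neg (by linarith : ¬ (0:ℝ) < y - t),
      abs_of_neg (sub_neg.2 hy)]
    rw [neg_sub]
    ring
  set F : ℝ → ℝ := fun y => p.eval y * w y with hF
  set G : ℝ → ℝ := fun y => (p.derivative + p * (C t - 2 * X)).eval y * w y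
      + γ * (p.eval y * w y / (y - t)) with hG
  have hFt : F t = 0 := by rw [hF]; simp [hwt]
  have hGint : Integrable G := (intPW _).add ((intPWt p).const_mul γ)
  -- derivative of the exponential factor
  have hdexp : ∀ y : ℝ, HasDerivAt (fun x : ℝ => Real.exp (-x ^ 2 + t * x))
      ((t - 2 * y) * Real.exp (-y ^ 2 + t * y)) y := by
    intro y
    have h1 : HasDerivAt (fun x : ℝ => -x ^ 2 + t * x) (t - 2 * y) y := by
      have := ((hasDerivAt_pow 2 y).neg.add ((hasDerivAt_id y).const_mul t))
      convert this using 1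
      case e'_4 => rfl
      case e'_5 => rfl
      case e'_8 => rfl
      simp; ring
    have := h1.exp
    convert this using 1
    ring
  -- derivative on the right of t
  have hderivIoi : ∀ y ∈ Set.Ioi t, HasDerivAt F (G y) y := by
    intro y hy
    rw [Set.mem_Ioi] at hy
    have hyt : (0:ℝ) < y - t := sub_pos.2 hy
    have hdr : HasDerivAt (fun x : ℝ => (x - t) ^ γ) (γ * (y - t) ^ (γ - 1)) y := by
      have h2 : HasDerivAt (fun x : ℝ => x - t) 1 y := (hasDerivAt_id y).sub_const t
      have h3 := Real.hasDerivAt_rpow_const (x := y - t) (p := γ) (Or.inl hyt.ne')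
      have := h3.comp y h2
      simpa [Function.comp_def] using this
    have hmul1 := (hdexp y).mul hdr
    have hmul2 := (p.hasDerivAt y).mul hmul1
    have hlocal := hmul2.const_mul (A + B)
    have heq : (fun x : ℝ => (A + B) * (p.eval x * (Real.exp (-x ^ 2 + t * x) * (x - t) ^ γ)))
        =ᶠ[nhds y] F := by
      filter_upwards [Ioi_mem_nhds hy] with x hx
      rw [hF]
      simp only
      rw [hwpos x hx]
      ring
    have hDF := hlocal.congr_of_eventuallyEq heq.symm
    convert hDF using 1
    case e'_4 => rfl
    case e'_5 => rfl
    rw [hG]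
    simp only [Polynomial.eval_add, Polynomial.eval_mul, Polynomial.eval_sub,
      Polynomial.eval_C, Polynomial.eval_X, Polynomial.eval_ofNat, Pi.mul_apply]
    rw [hwpos y hy]
    have hr1 : (y - t) ^ (γ - 1) = (y - t) ^ γ / (y - t) := by
      rw [Real.rpow_sub hyt, Real.rpow_one]
    rw [hr1]
    field_simp
    ring
  -- derivative on the left of t
  have hderivIio : ∀ y ∈ Set.Iio t, HasDerivAt F (G y) y := by
    intro y hy
    rw [Set.mem_Iio] at hy
    have hyt : (0:ℝ) < t - y := sub_pos.2 hy
    have hdr : HasDerivAt (fun x : ℝ => (t - x) ^ γ) (-(γ * (t - y) ^ (γ - 1))) y := by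
      have h2 : HasDerivAt (fun x : ℝ => t - x) (-1) y := (hasDerivAt_id y).const_sub t
      have h3 := Real.hasDerivAt_rpow_const (x := t - y) (p := γ) (Or.inl hyt.ne')
      have := h3.comp y h2
      convert this using 1
      case e'_4 => rfl
      case e'_5 => rfl
      case e'_8 => rfl
      ring
    have hmul1 := (hdexp y).mul hdr
    have hmul2 := (p.hasDerivAt y).mul hmul1
    have hlocal := hmul2.const_mul A
    have heq : (fun x : ℝ => A * (p.eval x * (Real.exp (-x ^ 2 + t * x) * (t - x) ^ γ)))
        =ᶠ[nhds y] F := by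
      filter_upwards [Iio_mem_nhds hy] with x hx
      rw [hF]
      simp only
      rw [hwneg x hx]
      ring
    have hDF := hlocal.congr_of_eventuallyEq heq.symm
    convert hDF using 1
    case e'_4 => rfl
    case e'_5 => rfl
    rw [hG]
    simp only [Polynomial.eval_add, Polynomial.eval_mul, Polynomial.eval_sub,
      Polynomial.eval_C, Polynomial.eval_X, Polynomial.eval_ofNat, Pi.mul_apply]
    rw [hwneg y hy]
    have hr1 : (t - y) ^ (γ - 1) = (t - y) ^ γ / (t - y) := by
      rw [Real.rpow_sub hyt, Real.rpow_one]
    rw [hr1]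
    field_simp [sub_ne_zero.2 hy.ne, sub_ne_zero.2 hy.ne']
    ring
  -- continuity at t
  have hcontAt : ContinuousAt F t := by
    have hexp_cont : Continuous fun y : ℝ => Real.exp (-y ^ 2 + t * y) := by fun_prop
    have hcomp : IsCompact (Set.Icc (t - 1) (t + 1)) := isCompact_Icc
    obtain ⟨Cc, hCc⟩ := hcomp.exists_bound_of_continuousOn
      ((Polynomial.continuous p).abs.mul hexp_cont).continuousOn
    have hrpc : Continuous fun y : ℝ => |y - t| ^ γ :=
      (Real.continuous_rpow_const hγ.le).comp
        (continuous_abs.comp (continuous_id.sub continuous_const))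
    have hgt : Tendsto (fun y : ℝ => (|Cc| * CB) * |y - t| ^ γ) (nhds t) (nhds 0) := by
      have hc2 : Continuous fun y : ℝ => (|Cc| * CB) * |y - t| ^ γ :=
        continuous_const.mul hrpc
      have := hc2.tendsto t
      simpa [Real.zero_rpow hγ.ne'] using this
    have hsq : Tendsto F (nhds t) (nhds 0) := by
      apply squeeze_zero_norm' _ hgt
      filter_upwards [Icc_mem_nhds (by linarith : t - 1 < t) (by linarith : t < t + 1)]
        with y hy
      have h1 : ‖F y‖ = |p.eval y| * |w y| := by rw [hF]; simp [abs_mul]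
      rw [h1]
      have hb := hCc y hy
      rw [Real.norm_eq_abs, abs_of_nonneg (by simp only [Pi.mul_apply]; positivity)] at hb
      have hb2 : |p.eval y| * Real.exp (-y ^ 2 + t * y) ≤ |Cc| := hb.trans (le_abs_self Cc)
      calc |p.eval y| * |w y|
          ≤ |p.eval y| * (CB * (Real.exp (-y ^ 2 + t * y) * |y - t| ^ γ)) :=
            mul_le_mul_of_nonneg_left (hwb y) (abs_nonneg _)
        _ = (|p.eval y| * Real.exp (-y ^ 2 + t * y)) * CB * |y - t| ^ γ := by ring
        _ ≤ |Cc| * CB * |y - t| ^ γ := by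
            have hnn : (0:ℝ) ≤ |y - t| ^ γ := Real.rpow_nonneg (abs_nonneg _) _
            have := mul_le_mul_of_nonneg_right
              (mul_le_mul_of_nonneg_right hb2 hCBnn) hnn
            exact this
        _ = |Cc| * CB * |y - t| ^ γ := rfl
    rw [ContinuousAt, hFt]
    exact hsq
  -- envelope polynomial for decay at infinity
  set m : ℕ := ⌈γ⌉₊ with hm
  set q : ℝ[X] := p * (X - C t) ^ m with hq
  have hqeval : ∀ y : ℝ, q.eval y = p.eval y * (y - t) ^ m := by
    intro y; simp [hq, Polynomial.eval_pow, Polynomial.eval_mul]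
  have hbnd : ∀ y : ℝ, 1 ≤ |y - t| →
      ‖F y‖ ≤ CB * (|q.eval y| * Real.exp (-y ^ 2 + t * y)) := by
    intro y hy1
    have hpow : |y - t| ^ γ ≤ |y - t| ^ (m : ℕ) := by
      have h1 : |y - t| ^ γ ≤ |y - t| ^ ((m : ℕ) : ℝ) :=
        Real.rpow_le_rpow_of_exponent_le hy1 (Nat.le_ceil γ)
      rwa [Real.rpow_natCast] at h1
    have h1 : ‖F y‖ = |p.eval y| * |w y| := by rw [hF]; simp [abs_mul]
    rw [h1]
    calc |p.eval y| * |w y|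
        ≤ |p.eval y| * (CB * (Real.exp (-y ^ 2 + t * y) * |y - t| ^ γ)) :=
          mul_le_mul_of_nonneg_left (hwb y) (abs_nonneg _)
      _ ≤ |p.eval y| * (CB * (Real.exp (-y ^ 2 + t * y) * |y - t| ^ (m:ℕ))) := by
          apply mul_le_mul_of_nonneg_left _ (abs_nonneg _)
          apply mul_le_mul_of_nonneg_left _ hCBnn
          exact mul_le_mul_of_nonneg_left hpow (Real.exp_pos _).le
      _ = CB * ((|p.eval y| * |y - t| ^ (m:ℕ)) * Real.exp (-y ^ 2 + t * y)) := by ring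
      _ = CB * (|q.eval y| * Real.exp (-y ^ 2 + t * y)) := by
          rw [hqeval y, abs_mul, abs_pow]
  have hTop : Tendsto F atTop (nhds 0) := by
    have hq0 : Tendsto (fun y : ℝ => CB * |q.eval y / Real.exp y|) atTop (nhds 0) := by
      have := (q.tendsto_div_exp_atTop).abs.const_mul CB
      simpa using this
    apply squeeze_zero_norm' _ hq0
    filter_upwards [eventually_ge_atTop (max (t + 1) 0)] with y hy
    have hy1 : t + 1 ≤ y := le_trans (le_max_left _ _) hy
    have hy0 : (0:ℝ) ≤ y := le_trans (le_max_right _ _) hy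
    have habs : 1 ≤ |y - t| := by rw [abs_of_nonneg (by linarith)]; linarith
    refine (hbnd y habs).trans ?_
    have hexp : Real.exp (-y ^ 2 + t * y) ≤ Real.exp (-y) := by
      apply Real.exp_le_exp.2; nlinarith
    calc CB * (|q.eval y| * Real.exp (-y ^ 2 + t * y))
        ≤ CB * (|q.eval y| * Real.exp (-y)) := by
          apply mul_le_mul_of_nonneg_left _ hCBnn
          exact mul_le_mul_of_nonneg_left hexp (abs_nonneg _)
      _ = CB * |q.eval y / Real.exp y| := by
          rw [abs_div, abs_of_pos (Real.exp_pos y), Real.exp_neg, div_eq_mul_inv]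
  have hBot : Tendsto F atBot (nhds 0) := by
    have hq1 : Tendsto (fun y : ℝ => q.eval y * Real.exp y) atBot (nhds 0) := by
      have h1 := (q.comp (-X)).tendsto_div_exp_atTop
      have h2 : Tendsto (fun y : ℝ => -y) atBot atTop := tendsto_neg_atBot_atTop
      have h3 := h1.comp h2
      apply h3.congr
      intro y
      simp only [Function.comp_apply, Polynomial.eval_comp, Polynomial.eval_neg,
        Polynomial.eval_X, neg_neg]
      rw [Real.exp_neg]
      field_simp
    have hq0 : Tendsto (fun y : ℝ => CB * |q.eval y * Real.exp y|) atBot (nhds 0) := by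
      simpa using hq1.abs.const_mul CB
    apply squeeze_zero_norm' _ hq0
    filter_upwards [eventually_le_atBot (min (t - 1) 0)] with y hy
    have hy1 : y ≤ t - 1 := le_trans hy (min_le_left _ _)
    have hy0 : y ≤ (0:ℝ) := le_trans hy (min_le_right _ _)
    have habs : 1 ≤ |y - t| := by rw [abs_of_nonpos (by linarith)]; linarith
    refine (hbnd y habs).trans ?_
    have hexp : Real.exp (-y ^ 2 + t * y) ≤ Real.exp y := by
      apply Real.exp_le_exp.2; nlinarith
    calc CB * (|q.eval y| * Real.exp (-y ^ 2 + t * y))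
        ≤ CB * (|q.eval y| * Real.exp y) := by
          apply mul_le_mul_of_nonneg_left _ hCBnn
          exact mul_le_mul_of_nonneg_left hexp (abs_nonneg _)
      _ = CB * |q.eval y * Real.exp y| := by
          rw [abs_mul, abs_of_pos (Real.exp_pos y)]
  have hIoiInt : ∫ y in Set.Ioi t, G y = 0 - F t :=
    MeasureTheory.integral_Ioi_of_hasDerivAt_of_tendsto hcontAt.continuousWithinAt
      hderivIoi hGint.integrableOn hTop
  have hIicInt : ∫ y in Set.Iic t, G y = F t - 0 :=
    MeasureTheory.integral_Iic_of_hasDerivAt_of_tendsto hcontAt.continuousWithinAt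
      hderivIio hGint.integrableOn hBot
  have htotal : ∫ y : ℝ, G y = 0 := by
    have hsum := intervalIntegral.integral_Iic_add_Ioi (μ := volume) (f := G) (b := t)
      hGint.integrableOn hGint.integrableOn
    rw [hIoiInt, hIicInt] at hsum
    linarith
  have hsplit : ∫ y : ℝ, G y = (∫ y : ℝ, (p.derivative + p * (C t - 2 * X)).eval y * w y)
      + γ * ∫ y : ℝ, p.eval y * w y / (y - t) := by
    rw [hG, MeasureTheory.integral_add (intPW _) ((intPWt p).const_mul γ),
      MeasureTheory.integral_const_mul]
  rw [← hsplit]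
  exact htotal




end S2Aux

/-- Compatibility condition (S2): for every n >= 0 and every z with nonzero
imaginary part, 1 + (z - alpha_n)(B_{n+1}(z) - B_n(z)) =
beta_{n+1} A_{n+1}(z) - beta_n A_{n-1}(z), with the conventions B_0(z) = 0 and
beta_0 A_{-1}(z) = 0 when n = 0 (here beta_0 = 0 and n - 1 is truncated
subtraction, so the last term vanishes for n = 0). -/
theorem compatibility_S2
    (t γ A B : ℝ) (hγ : 0 < γ) (hA : 0 ≤ A) (hAB : 0 ≤ A + B)
    (hABpos : 0 < A ∨ 0 < A + B)
    (w : ℝ → ℝ)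
    (hw : ∀ y : ℝ, w y =
      Real.exp (-y ^ 2 + t * y) * |y - t| ^ γ *
        (A + B * (if 0 < y - t then (1 : ℝ) else 0)))
    (P : ℕ → Polynomial ℝ)
    (hmonic : ∀ n, (P n).Monic)
    (hdeg : ∀ n, (P n).natDegree = n)
    (horth : ∀ m n, m ≠ n →
      ∫ y : ℝ, (P m).eval y * (P n).eval y * w y = 0)
    (h : ℕ → ℝ)
    (hh : ∀ n, h n = ∫ y : ℝ, ((P n).eval y) ^ 2 * w y)
    (hhpos : ∀ n, 0 < h n)
    (β : ℕ → ℝ)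
    (hβ : ∀ n, 1 ≤ n → β n = h n / h (n - 1))
    (An Bn : ℕ → ℂ → ℂ)
    (hAn : ∀ n, ∀ z : ℂ, z.im ≠ 0 → An n z =
      2 + (↑(γ / h n) : ℂ) *
        ∫ y : ℝ, (↑(((P n).eval y) ^ 2 * w y) : ℂ) /
          ((z - (y : ℂ)) * ((y : ℂ) - (t : ℂ))))
    (hBn : ∀ n, 1 ≤ n → ∀ z : ℂ, z.im ≠ 0 → Bn n z =
      (↑(γ / h (n - 1)) : ℂ) *
        ∫ y : ℝ, (↑((P n).eval y * (P (n - 1)).eval y * w y) : ℂ) /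
          ((z - (y : ℂ)) * ((y : ℂ) - (t : ℂ))))
    (hB0 : ∀ z : ℂ, Bn 0 z = 0)
    (α : ℕ → ℝ)
    (hα : ∀ n, α n = (∫ y : ℝ, y * ((P n).eval y) ^ 2 * w y) / h n)
    (hβ0 : β 0 = 0) :
    ∀ n : ℕ, ∀ z : ℂ, z.im ≠ 0 →
      1 + (z - (α n : ℂ)) * (Bn (n + 1) z - Bn n z) =
        (β (n + 1) : ℂ) * An (n + 1) z - (β n : ℂ) * An (n - 1) z := by

  have hγ1 : (-1:ℝ) < γ := by linarith
  have hγ1' : (-1:ℝ) < γ - 1 := by linarith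
  set CB : ℝ := |A| + |B| with hCB
  have hCBnn : 0 ≤ CB := by positivity
  have hwb : ∀ y : ℝ, |w y| ≤ CB * (Real.exp (-y ^ 2 + t * y) * |y - t| ^ γ) := by
    intro y
    rw [hw y, abs_mul, abs_mul, abs_of_nonneg (Real.exp_pos _).le,
      abs_of_nonneg (Real.rpow_nonneg (abs_nonneg _) _)]
    have hb : |A + B * (if 0 < y - t then (1 : ℝ) else 0)| ≤ CB := by
      split_ifs with hif
      · rw [mul_one]; exact (abs_add_le _ _).trans (by rw [hCB])
      · rw [mul_zero, add_zero, hCB]; nlinarith [abs_nonneg B]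
    calc Real.exp (-y ^ 2 + t * y) * |y - t| ^ γ * |A + B * (if 0 < y - t then (1:ℝ) else 0)|
        ≤ Real.exp (-y ^ 2 + t * y) * |y - t| ^ γ * CB := by
          apply mul_le_mul_of_nonneg_left hb (by positivity)
      _ = CB * (Real.exp (-y ^ 2 + t * y) * |y - t| ^ γ) := by ring
  have hwt : w t = 0 := by rw [hw t]; simp [Real.zero_rpow hγ.ne']
  have hwm : Measurable w := by
    have : w = fun y => Real.exp (-y ^ 2 + t * y) * |y - t| ^ γ *
        (A + B * (if 0 < y - t then (1 : ℝ) else 0)) := funext hw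
    rw [this]
    apply Measurable.mul
    · fun_prop
    · apply Measurable.add measurable_const
      apply Measurable.mul measurable_const
      exact Measurable.ite (measurableSet_lt measurable_const (by fun_prop))
        measurable_const measurable_const
  have intPW : ∀ p : Polynomial ℝ, Integrable fun y : ℝ => p.eval y * w y :=
    fun p => S2_poly_int t hγ1 w hwm.aestronglyMeasurable hwb p
  have hu1b : ∀ y : ℝ, |w y / (y - t)| ≤ CB * (Real.exp (-y ^ 2 + t * y) * |y - t| ^ (γ - 1)) := by
    intro y
    rcases eq_or_ne y t with rfl | hyt
    · rw [hwt, zero_div, abs_zero]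
      positivity
    · have habs : (0:ℝ) < |y - t| := abs_pos.2 (sub_ne_zero.2 hyt)
      rw [abs_div]
      have hr : |y - t| ^ (γ - 1) = |y - t| ^ γ / |y - t| := by
        rw [Real.rpow_sub habs, Real.rpow_one]
      rw [hr]
      rw [div_le_iff₀ habs]
      calc |w y| ≤ CB * (Real.exp (-y ^ 2 + t * y) * |y - t| ^ γ) := hwb y
        _ = CB * (Real.exp (-y ^ 2 + t * y) * (|y - t| ^ γ / |y - t|)) * |y - t| := by
            field_simp
  have intPWt : ∀ p : Polynomial ℝ, Integrable fun y : ℝ => p.eval y * w y / (y - t) := by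
    intro p
    have hm : Measurable fun y : ℝ => w y / (y - t) := hwm.div (by fun_prop)
    have := S2_poly_int t hγ1' _ hm.aestronglyMeasurable hu1b p
    simpa [mul_div_assoc] using this
  have hne : ∀ k, h k ≠ 0 := fun k => (hhpos k).ne'
  have hco : ∀ k, (P k).coeff k = 1 := by
    intro k
    have := (hmonic k).coeff_natDegree
    rwa [hdeg k] at this
  have hproj := S2_proj hmonic hdeg horth hh intPW
  have hPP : ∀ m k, ∫ y : ℝ, (P m * P k).eval y * w y = if m = k then h k else 0 := by
    intro m k
    by_cases hmk : m = k
    · subst hmk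
      simp only [if_pos rfl, hh m]
      congr 1; funext y; simp only [Polynomial.eval_mul]; ring
    · rw [if_neg hmk, ← horth m k hmk]
      congr 1; funext y; simp only [Polynomial.eval_mul]
  have hrec := S2_rec hmonic hdeg horth hh hhpos hα hβ hβ0 intPW
  -- the key moment identity from integration by parts
  have key : ∀ k : ℕ, γ * (∫ y : ℝ, (P (k+1) * P k).eval y * w y / (y - t))
      = 2 * h (k+1) - ((k:ℝ)+1) * h k := by
    intro k
    have hftc := S2_ftc t γ A B hγ hw intPW intPWt (P (k+1) * P k)
    have hd1 : (∫ y : ℝ, ((P (k+1)).derivative * P k).eval y * w y) = ((k:ℝ)+1) * h k := by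
      rw [hproj ((P (k+1)).derivative) k
        (le_trans (Polynomial.natDegree_derivative_le _) (by rw [hdeg]; omega))]
      rw [Polynomial.coeff_derivative, hco (k+1)]
      push_cast; ring
    have hd2 : (∫ y : ℝ, ((P k).derivative * P (k+1)).eval y * w y) = 0 := by
      rw [hproj ((P k).derivative) (k+1)
        (le_trans (Polynomial.natDegree_derivative_le _) (by rw [hdeg]; omega))]
      rw [Polynomial.coeff_derivative,
        Polynomial.coeff_eq_zero_of_natDegree_lt (by rw [hdeg]; omega)]
      ring
    have hd3 : (∫ y : ℝ, ((Polynomial.X * P k) * P (k+1)).eval y * w y) = h (k+1) := by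
      rw [hproj (Polynomial.X * P k) (k+1)
        (le_trans Polynomial.natDegree_mul_le (by simp [Polynomial.natDegree_X, hdeg]; omega))]
      rw [Polynomial.coeff_X_mul, hco k, one_mul]
    have hd4 : (∫ y : ℝ, (P (k+1) * P k).eval y * w y) = 0 := by
      have := hPP (k+1) k; rwa [if_neg (by omega)] at this
    have e : (fun y : ℝ => ((P (k+1) * P k).derivative
        + (P (k+1) * P k) * (Polynomial.C t - 2 * Polynomial.X)).eval y * w y)
        = fun y : ℝ => ((P (k+1)).derivative * P k).eval y * w y
          + ((P k).derivative * P (k+1)).eval y * w y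
          + (t * ((P (k+1) * P k).eval y * w y)
            - 2 * (((Polynomial.X * P k) * P (k+1)).eval y * w y)) := by
      funext y
      simp only [Polynomial.derivative_mul, Polynomial.eval_add, Polynomial.eval_mul,
        Polynomial.eval_sub, Polynomial.eval_C, Polynomial.eval_X, Polynomial.eval_ofNat]
      ring
    have i1 := intPW ((P (k+1)).derivative * P k)
    have i2 := intPW ((P k).derivative * P (k+1))
    have i3 : Integrable (fun y : ℝ => t * ((P (k+1) * P k).eval y * w y)
        - 2 * (((Polynomial.X * P k) * P (k+1)).eval y * w y)) :=
      ((intPW _).const_mul t).sub ((intPW _).const_mul 2)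
    have i12 : Integrable (fun y : ℝ => ((P (k+1)).derivative * P k).eval y * w y
        + ((P k).derivative * P (k+1)).eval y * w y) := i1.add i2
    rw [e, MeasureTheory.integral_add i12 i3, MeasureTheory.integral_add i1 i2,
      MeasureTheory.integral_sub ((intPW _).const_mul t) ((intPW _).const_mul 2),
      MeasureTheory.integral_const_mul, MeasureTheory.integral_const_mul,
      hd1, hd2, hd3, hd4] at hftc
    linarith
  -- complex part
  intro n z hz
  have hzy : ∀ y : ℝ, z - (y:ℂ) ≠ 0 := by
    intro y hc
    apply hz
    have := congrArg Complex.im hc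
    simpa using this
  have intPWz : ∀ p : Polynomial ℝ, Integrable fun y : ℝ =>
      (↑(p.eval y * w y) : ℂ) / ((z - (y:ℂ)) * ((y:ℂ) - (t:ℂ))) := by
    intro p
    have hmz : Measurable fun y : ℝ =>
        (↑(p.eval y * w y) : ℂ) / ((z - (y:ℂ)) * ((y:ℂ) - (t:ℂ))) := by
      apply Measurable.div
      · exact Complex.measurable_ofReal.comp ((p.continuous.measurable).mul hwm)
      · fun_prop
    have him : (0:ℝ) < |z.im| := abs_pos.2 hz
    refine Integrable.mono' (((intPWt p).abs.const_mul |z.im|⁻¹)) hmz.aestronglyMeasurable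
      (Filter.Eventually.of_forall fun y => ?_)
    rcases eq_or_ne y t with rfl | hyt
    · have : ((y:ℂ) - (y:ℂ)) = 0 := by ring
      rw [this, mul_zero, div_zero, norm_zero]
      positivity
    · have habs : (0:ℝ) < |y - t| := abs_pos.2 (sub_ne_zero.2 hyt)
      rw [norm_div, norm_mul]
      have h1 : ‖((y:ℂ) - (t:ℂ))‖ = |y - t| := by
        rw [(by push_cast; ring : ((y:ℂ) - (t:ℂ)) = ((y - t : ℝ) : ℂ)), Complex.norm_real,
          Real.norm_eq_abs]
      have h2 : ‖(↑(p.eval y * w y) : ℂ)‖ = |p.eval y * w y| := by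
        rw [Complex.norm_real, Real.norm_eq_abs]
      have h3 : |z.im| ≤ ‖z - (y:ℂ)‖ := by
        have := Complex.abs_im_le_norm (z - (y:ℂ))
        simpa [Complex.sub_im, Complex.ofReal_im] using this
      rw [h1, h2]
      have h4 : ‖z - (y:ℂ)‖ * |y - t| > 0 := by
        have : (0:ℝ) < ‖z - (y:ℂ)‖ := lt_of_lt_of_le him h3
        positivity
      calc |p.eval y * w y| / (‖z - (y:ℂ)‖ * |y - t|)
          ≤ |p.eval y * w y| / (|z.im| * |y - t|) := by
            apply div_le_div_of_nonneg_left (abs_nonneg _) (by positivity)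
            exact mul_le_mul_of_nonneg_right h3 (abs_nonneg _)
        _ = |z.im|⁻¹ * |p.eval y * w y / (y - t)| := by
            rw [abs_div]
            field_simp
  set Jz : Polynomial ℝ → ℂ := fun r => ∫ y : ℝ,
      (↑(r.eval y * w y) : ℂ) / ((z - (y:ℂ)) * ((y:ℂ) - (t:ℂ))) with hJz
  have hJkey : ∀ (r : Polynomial ℝ) (c : ℝ), (z - (c:ℂ)) * Jz r
      = (↑(∫ y : ℝ, r.eval y * w y / (y - t)) : ℂ) + Jz ((Polynomial.X - Polynomial.C c) * r) := by
    intro r c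
    rw [hJz]
    simp only
    have hIof : (↑(∫ y : ℝ, r.eval y * w y / (y - t)) : ℂ)
        = ∫ y : ℝ, ((r.eval y * w y / (y - t) : ℝ) : ℂ) :=
      (integral_ofReal (𝕜 := ℂ) (f := fun y : ℝ => r.eval y * w y / (y - t))).symm
    have hIR : Integrable fun y : ℝ => ((r.eval y * w y / (y - t) : ℝ) : ℂ) :=
      (intPWt r).ofReal
    rw [← MeasureTheory.integral_const_mul, hIof,
      ← MeasureTheory.integral_add hIR (intPWz ((Polynomial.X - Polynomial.C c) * r))]
    congr 1
    funext y
    rcases eq_or_ne y t with rfl | hyt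
    · rw [hwt]
      simp
    · have h1 : ((y:ℂ) - (t:ℂ)) ≠ 0 := by
        rw [(by push_cast; ring : ((y:ℂ) - (t:ℂ)) = ((y - t : ℝ) : ℂ))]
        exact_mod_cast sub_ne_zero.2 hyt
      have h2 : z - (y:ℂ) ≠ 0 := hzy y
      have h3 : (y:ℝ) - t ≠ 0 := sub_ne_zero.2 hyt
      simp only [Polynomial.eval_mul, Polynomial.eval_sub, Polynomial.eval_X, Polynomial.eval_C]
      push_cast
      field_simp
      ring
  have hJadd : ∀ r s : Polynomial ℝ, Jz (r + s) = Jz r + Jz s := by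
    intro r s
    rw [hJz]
    simp only
    rw [← MeasureTheory.integral_add (intPWz r) (intPWz s)]
    congr 1
    funext y
    rw [Polynomial.eval_add]
    push_cast
    rw [← add_div, add_mul]
  have hJsmul : ∀ (a : ℝ) (r : Polynomial ℝ), Jz (Polynomial.C a * r) = (a:ℂ) * Jz r := by
    intro a r
    rw [hJz]
    simp only
    rw [← MeasureTheory.integral_const_mul]
    congr 1
    funext y
    rw [Polynomial.eval_mul, Polynomial.eval_C]
    push_cast
    ring
  have hAn' : ∀ k, An k z = 2 + (↑(γ / h k) : ℂ) * Jz (P k * P k) := by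
    intro k
    rw [hAn k z hz, hJz]
    have e : (fun y : ℝ => (↑(((P k).eval y) ^ 2 * w y) : ℂ) / ((z - (y:ℂ)) * ((y:ℂ) - (t:ℂ))))
        = fun y : ℝ => (↑((P k * P k).eval y * w y) : ℂ) / ((z - (y:ℂ)) * ((y:ℂ) - (t:ℂ))) := by
      funext y
      have : ((P k).eval y) ^ 2 * w y = (P k * P k).eval y * w y := by
        rw [Polynomial.eval_mul]; ring
      rw [this]
    rw [e]
  have hBn' : ∀ k, Bn (k+1) z = (↑(γ / h k) : ℂ) * Jz (P (k+1) * P k) := by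
    intro k
    rw [hBn (k+1) (by omega) z hz, Nat.add_sub_cancel, hJz]
    have e : (fun y : ℝ => (↑((P (k+1)).eval y * (P k).eval y * w y) : ℂ) / ((z - (y:ℂ)) * ((y:ℂ) - (t:ℂ))))
        = fun y : ℝ => (↑((P (k+1) * P k).eval y * w y) : ℂ) / ((z - (y:ℂ)) * ((y:ℂ) - (t:ℂ))) := by
      funext y
      have : (P (k+1)).eval y * (P k).eval y * w y = (P (k+1) * P k).eval y * w y := by
        rw [Polynomial.eval_mul]
      rw [this]
    rw [e]
  rcases n with _ | m
  · -- n = 0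
    rw [hB0 z, hBn' 0, hAn' 1, hβ0]
    have hpoly : (Polynomial.X - Polynomial.C (α 0)) * (P 1 * P 0) = P 1 * P 1 := by
      have h0 := hrec 0
      rw [hβ0, map_zero, zero_mul, add_zero] at h0
      linear_combination (P 1) * h0
    have e1 : (z - (↑(α 0):ℂ)) * Jz (P 1 * P 0)
        = (↑(∫ y : ℝ, (P 1 * P 0).eval y * w y / (y - t)) : ℂ) + Jz (P 1 * P 1) := by
      rw [hJkey (P 1 * P 0) (α 0), hpoly]
    have c2 : β 1 = h 1 / h 0 := by simpa using hβ 1 le_rfl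
    have s0 : γ * (∫ y : ℝ, (P 1 * P 0).eval y * w y / (y - t)) = 2 * h 1 - 1 * h 0 := by
      have := key 0
      push_cast at this
      linarith
    have f1 : (γ / h 0) * (∫ y : ℝ, (P 1 * P 0).eval y * w y / (y - t)) = 2 * β 1 - 1 := by
      rw [c2, div_mul_eq_mul_div, s0, sub_div, mul_div_assoc, one_mul, div_self (hne 0)]
    have f2 : β 1 * (γ / h 1) = γ / h 0 := by
      rw [c2, div_mul_div_comm, mul_comm (h 0) (h 1), mul_div_mul_left _ _ (hne 1)]
    have f1C : (↑(γ / h 0) : ℂ) * (↑(∫ y : ℝ, (P 1 * P 0).eval y * w y / (y - t)) : ℂ)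
        = 2 * (↑(β 1):ℂ) - 1 := by exact_mod_cast congrArg Complex.ofReal f1
    have f2C : (↑(β 1):ℂ) * (↑(γ / h 1):ℂ) = (↑(γ / h 0):ℂ) := by
      exact_mod_cast congrArg Complex.ofReal f2
    rw [Complex.ofReal_zero]
    linear_combination (↑(γ / h 0) : ℂ) * e1 + f1C - Jz (P 1 * P 1) * f2C
  · -- n = m + 1
    rw [hBn' (m+1), hBn' m, (by omega : m + 1 - 1 = m), hAn' m,
      (by omega : m + 1 + 1 = m + 2), hAn' (m+2)]
    have hrecm := hrec (m+1)
    rw [Nat.add_sub_cancel] at hrecm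
    have hpoly1 : (Polynomial.X - Polynomial.C (α (m+1))) * (P (m+2) * P (m+1))
        = P (m+2) * P (m+2) + Polynomial.C (β (m+1)) * (P (m+2) * P m) := by
      linear_combination (P (m+2)) * hrecm
    have hpoly2 : (Polynomial.X - Polynomial.C (α (m+1))) * (P (m+1) * P m)
        = P (m+2) * P m + Polynomial.C (β (m+1)) * (P m * P m) := by
      linear_combination (P m) * hrecm
    set Lr1 := ∫ y : ℝ, (P (m+2) * P (m+1)).eval y * w y / (y - t) with hLr1
    set Lr0 := ∫ y : ℝ, (P (m+1) * P m).eval y * w y / (y - t) with hLr0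
    have e1 : (z - (↑(α (m+1)):ℂ)) * Jz (P (m+2) * P (m+1))
        = (↑Lr1 : ℂ) + Jz (P (m+2) * P (m+2)) + (↑(β (m+1)):ℂ) * Jz (P (m+2) * P m) := by
      rw [hJkey (P (m+2) * P (m+1)) (α (m+1)), hpoly1, hJadd, hJsmul]
      ring
    have e2 : (z - (↑(α (m+1)):ℂ)) * Jz (P (m+1) * P m)
        = (↑Lr0 : ℂ) + Jz (P (m+2) * P m) + (↑(β (m+1)):ℂ) * Jz (P m * P m) := by
      rw [hJkey (P (m+1) * P m) (α (m+1)), hpoly2, hJadd, hJsmul]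
      ring
    have hβ1 : β (m+1) = h (m+1) / h m := by simpa using hβ (m+1) (by omega)
    have hβ2 : β (m+2) = h (m+2) / h (m+1) := by
      have := hβ (m+2) (by omega)
      simpa using this
    have keym1 : γ * Lr1 = 2 * h (m+2) - ((m:ℝ)+2) * h (m+1) := by
      have := key (m+1)
      push_cast at this
      rw [hLr1]
      rw [(by omega : m + 1 + 1 = m + 2)] at this
      linarith
    have keym0 : γ * Lr0 = 2 * h (m+1) - ((m:ℝ)+1) * h m := by
      have := key m
      push_cast at this
      rw [hLr0]
      linarith
    have s1 : (γ / h (m+1)) * Lr1 = 2 * β (m+2) - ((m:ℝ)+2) := by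
      rw [hβ2, div_mul_eq_mul_div, keym1, sub_div, mul_div_assoc, mul_div_assoc,
        div_self (hne (m+1)), mul_one]
    have s2 : (γ / h m) * Lr0 = 2 * β (m+1) - ((m:ℝ)+1) := by
      rw [hβ1, div_mul_eq_mul_div, keym0, sub_div, mul_div_assoc, mul_div_assoc,
        div_self (hne m), mul_one]
    have c1 : (γ / h (m+1)) * β (m+1) = γ / h m := by
      rw [hβ1, div_mul_div_comm, mul_comm γ (h (m+1)), mul_div_mul_left _ _ (hne (m+1))]
    have c2 : β (m+2) * (γ / h (m+2)) = γ / h (m+1) := by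
      rw [hβ2, div_mul_div_comm, mul_comm (h (m+1)) (h (m+2)), mul_div_mul_left _ _ (hne (m+2))]
    have s1C : (↑(γ / h (m+1)) : ℂ) * (↑Lr1:ℂ) = 2 * (↑(β (m+2)):ℂ) - ((m:ℂ)+2) := by
      exact_mod_cast congrArg Complex.ofReal s1
    have s2C : (↑(γ / h m) : ℂ) * (↑Lr0:ℂ) = 2 * (↑(β (m+1)):ℂ) - ((m:ℂ)+1) := by
      exact_mod_cast congrArg Complex.ofReal s2
    have c1C : (↑(γ / h (m+1)) : ℂ) * (↑(β (m+1)):ℂ) = (↑(γ / h m):ℂ) := by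
      exact_mod_cast congrArg Complex.ofReal c1
    have c2C : (↑(β (m+2)):ℂ) * (↑(γ / h (m+2)):ℂ) = (↑(γ / h (m+1)):ℂ) := by
      exact_mod_cast congrArg Complex.ofReal c2
    linear_combination (↑(γ / h (m+1)) : ℂ) * e1 - (↑(γ / h m) : ℂ) * e2 + s1C - s2C
      + Jz (P (m+2) * P m) * c1C - Jz (P (m+2) * P (m+2)) * c2C
end

section
/- For every integer n ≥ 1, the auxiliary quantities satisfy (t − α_n)(r_{n+1}(t) − r_n(t)) = β_{n+1} R_{n+1}(t) − β_n R_{n−1}(t). -/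
open MeasureTheory Polynomial Real Filter Topology


private lemma tendstoAux (Q : Polynomial ℝ) {a : ℝ} (ha : 0 < a) (b : ℝ) :
    Tendsto (fun y : ℝ => Q.eval y * Real.exp (-(a * y ^ 2) + b * y)) atTop (𝓝 0) := by
  apply squeeze_zero_norm' (a := fun y : ℝ => ‖Q.eval y / Real.exp y‖)
  · filter_upwards [eventually_ge_atTop ((b + 1) / a), eventually_ge_atTop 0] with y h1 h2
    rw [norm_mul, norm_div, Real.norm_eq_abs (Real.exp _), Real.norm_eq_abs (Real.exp _),
      abs_of_pos (Real.exp_pos _), abs_of_pos (Real.exp_pos _), div_eq_mul_inv, ← Real.exp_neg]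
    apply mul_le_mul_of_nonneg_left _ (abs_nonneg _)
    apply Real.exp_le_exp.2
    have hya : (b + 1) ≤ a * y := by
      rw [div_le_iff₀ ha] at h1; linarith [h1]
    nlinarith
  · have := (Q.tendsto_div_exp_atTop).norm
    simpa using this

private lemma tendstoAuxBot (Q : Polynomial ℝ) {a : ℝ} (ha : 0 < a) (b : ℝ) :
    Tendsto (fun y : ℝ => Q.eval y * Real.exp (-(a * y ^ 2) + b * y)) atBot (𝓝 0) := by
  have h2 := tendstoAux (Q.comp (-X)) ha (-b)
  have h3 : Tendsto (fun y : ℝ => Q.eval (-y) * Real.exp (-(a * y ^ 2) + (-b) * y)) atTop (𝓝 0) := by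
    refine h2.congr fun y => ?_
    simp [eval_comp]
  have h4 := h3.comp tendsto_neg_atBot_atTop
  refine h4.congr fun y => ?_
  simp only [Function.comp]
  rw [neg_neg]
  ring_nf

private lemma boundAux (Q : Polynomial ℝ) {a : ℝ} (ha : 0 < a) (b : ℝ) :
    ∃ C : ℝ, 0 ≤ C ∧ ∀ y : ℝ, |Q.eval y| * Real.exp (-(a * y ^ 2) + b * y) ≤ C := by
  set f : ℝ → ℝ := fun y => |Q.eval y| * Real.exp (-(a * y ^ 2) + b * y) with hf
  have habs : ∀ y, f y = |Q.eval y * Real.exp (-(a * y ^ 2) + b * y)| := by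
    intro y; rw [abs_mul, abs_of_pos (Real.exp_pos _)]
  have hcont : Continuous f :=
    (continuous_abs.comp Q.continuous).mul (Real.continuous_exp.comp (by continuity))
  have htop : Tendsto f atTop (𝓝 0) := by
    have := (tendstoAux Q ha b).abs
    rw [abs_zero] at this
    exact this.congr fun y => (habs y).symm
  have hbot : Tendsto f atBot (𝓝 0) := by
    have := (tendstoAuxBot Q ha b).abs
    rw [abs_zero] at this
    exact this.congr fun y => (habs y).symm
  have hco : Tendsto f (cocompact ℝ) (𝓝 0) := by
    rw [cocompact_eq_atBot_atTop]
    exact tendsto_sup.2 ⟨hbot, htop⟩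
  set g : ℝ → ℝ := fun y => max (f y) 1 with hg
  have hgc : Continuous g := hcont.max continuous_const
  have hev : ∀ᶠ y in cocompact ℝ, g y ≤ g 0 := by
    filter_upwards [hco.eventually (eventually_le_nhds (show (0:ℝ) < 1 by norm_num))]
      with y hy
    calc g y = max (f y) 1 := rfl
      _ ≤ 1 := max_le hy le_rfl
      _ ≤ g 0 := le_max_right _ _
  obtain ⟨x, hx⟩ := hgc.exists_forall_ge' 0 hev
  refine ⟨g x, zero_le_one.trans (le_max_right _ _), fun y => ?_⟩
  exact (le_max_left (f y) 1).trans (hx y)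


private lemma integrableAbsRpow {b : ℝ} (hb : 0 < b) {s : ℝ} (hs : -1 < s) :
    Integrable (fun x : ℝ => |x| ^ s * Real.exp (-b * x ^ 2)) := by
  have h1 := integrable_rpow_mul_exp_neg_mul_sq hb hs
  have h2 : Integrable (fun x : ℝ => (-x) ^ s * Real.exp (-b * x ^ 2)) := by
    have := h1.comp_neg
    refine this.congr (Eventually.of_forall fun x => ?_)
    simp
  refine (h1.sup h2).congr (Eventually.of_forall fun x => ?_)
  have he : (0:ℝ) < Real.exp (-b * x ^ 2) := Real.exp_pos _
  simp only [Pi.sup_apply]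
  rw [show (x ^ s * Real.exp (-b * x ^ 2)) ⊔ ((-x) ^ s * Real.exp (-b * x ^ 2))
      = max (x ^ s) ((-x) ^ s) * Real.exp (-b * x ^ 2) from
    (max_mul_of_nonneg _ _ he.le).symm]
  congr 1
  rcases le_or_gt 0 x with hx | hx
  · rw [abs_of_nonneg hx]
    apply max_eq_left
    calc (-x) ^ s ≤ |(-x) ^ s| := le_abs_self _
      _ ≤ |(-x)| ^ s := Real.abs_rpow_le_abs_rpow _ _
      _ = x ^ s := by rw [abs_neg, abs_of_nonneg hx]
  · rw [abs_of_neg hx]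
    apply max_eq_right
    calc x ^ s ≤ |x ^ s| := le_abs_self _
      _ ≤ |x| ^ s := Real.abs_rpow_le_abs_rpow _ _
      _ = (-x) ^ s := by rw [abs_of_neg hx]

private lemma integrableShift (t : ℝ) {b s : ℝ} (hb : 0 < b) (hs : -1 < s) :
    Integrable (fun y : ℝ => |y - t| ^ s * Real.exp (-b * (y - t) ^ 2)) :=
  (integrableAbsRpow hb hs).comp_sub_right t


section W
variable (t γ A B : ℝ) (w : ℝ → ℝ)

private lemma wAbsBound (hA : 0 ≤ A) (hAB : 0 ≤ A + B)
    (hw : ∀ y : ℝ, w y =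
      Real.exp (-y ^ 2 + t * y) * |y - t| ^ γ *
        (A + B * (if 0 < y - t then (1 : ℝ) else 0))) (y : ℝ) :
    |w y| ≤ Real.exp (-y ^ 2 + t * y) * |y - t| ^ γ * (A + |B|) := by
  rw [hw y, abs_mul, abs_mul, abs_of_pos (Real.exp_pos _),
    abs_of_nonneg (Real.rpow_nonneg (abs_nonneg _) _)]
  have h1 : |A + B * (if 0 < y - t then (1 : ℝ) else 0)| ≤ A + |B| := by
    split_ifs with hc
    · rw [mul_one, abs_of_nonneg hAB]
      have := le_abs_self B; linarith
    · rw [mul_zero, add_zero, abs_of_nonneg hA]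
      have := abs_nonneg B; linarith
  have h2 : 0 ≤ Real.exp (-y ^ 2 + t * y) * |y - t| ^ γ := by positivity
  calc Real.exp (-y ^ 2 + t * y) * |y - t| ^ γ * |A + B * (if 0 < y - t then (1:ℝ) else 0)|
      ≤ Real.exp (-y ^ 2 + t * y) * |y - t| ^ γ * (A + |B|) :=
        mul_le_mul_of_nonneg_left h1 h2

private lemma wMeasurable (hγ : 0 ≤ γ)
    (hw : ∀ y : ℝ, w y =
      Real.exp (-y ^ 2 + t * y) * |y - t| ^ γ *
        (A + B * (if 0 < y - t then (1 : ℝ) else 0))) :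
    Measurable w := by
  have : w = fun y => Real.exp (-y ^ 2 + t * y) * |y - t| ^ γ *
      (A + B * (if 0 < y - t then (1 : ℝ) else 0)) := funext hw
  rw [this]
  have m1 : Measurable fun y : ℝ => Real.exp (-y ^ 2 + t * y) :=
    (Real.continuous_exp.comp (by continuity)).measurable
  have m2 : Measurable fun y : ℝ => |y - t| ^ γ :=
    ((continuous_abs.comp (continuous_id.sub continuous_const)).rpow_const
      (fun x => Or.inr hγ)).measurable
  have m3 : Measurable fun y : ℝ => A + B * (if 0 < y - t then (1 : ℝ) else 0) := by
    apply measurable_const.add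
    apply measurable_const.mul
    exact Measurable.ite (measurableSet_lt measurable_const
      ((measurable_id.sub measurable_const))) measurable_const measurable_const
  exact (m1.mul m2).mul m3

-- key exponential bound
private lemma keyExp (Q : Polynomial ℝ) :
    ∃ C : ℝ, 0 ≤ C ∧ ∀ y : ℝ,
      |Q.eval y| * Real.exp (-y ^ 2 + t * y) ≤ C * Real.exp (-(1/4) * (y - t) ^ 2) := by
  obtain ⟨C, hC0, hC⟩ := boundAux Q (a := 3/4) (by norm_num) (t / 2)
  refine ⟨C * Real.exp (t ^ 2 / 4), by positivity, fun y => ?_⟩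
  have e1 : Real.exp (-y ^ 2 + t * y)
      = Real.exp (-(3/4 * y ^ 2) + t / 2 * y) * (Real.exp (t ^ 2 / 4)
        * Real.exp (-(1/4) * (y - t) ^ 2)) := by
    rw [← Real.exp_add, ← Real.exp_add]
    ring_nf
  calc |Q.eval y| * Real.exp (-y ^ 2 + t * y)
      = |Q.eval y| * Real.exp (-(3/4 * y ^ 2) + t / 2 * y)
        * (Real.exp (t ^ 2 / 4) * Real.exp (-(1/4) * (y - t) ^ 2)) := by rw [e1]; ring
    _ ≤ C * (Real.exp (t ^ 2 / 4) * Real.exp (-(1/4) * (y - t) ^ 2)) := by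
        apply mul_le_mul_of_nonneg_right (hC y) (by positivity)
    _ = C * Real.exp (t ^ 2 / 4) * Real.exp (-(1/4) * (y - t) ^ 2) := by ring

private lemma intMain (hγ : 0 < γ) (hA : 0 ≤ A) (hAB : 0 ≤ A + B)
    (hw : ∀ y : ℝ, w y =
      Real.exp (-y ^ 2 + t * y) * |y - t| ^ γ *
        (A + B * (if 0 < y - t then (1 : ℝ) else 0)))
    (Q : Polynomial ℝ) :
    Integrable (fun y : ℝ => Q.eval y * w y) := by
  obtain ⟨C, hC0, hC⟩ := keyExp t Q
  have hint : Integrable (fun y : ℝ =>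
      (C * (A + |B|)) * (|y - t| ^ γ * Real.exp (-(1/4) * (y - t) ^ 2))) :=
    ((integrableShift t (by norm_num) (by linarith : (-1:ℝ) < γ)).const_mul _)
  refine hint.mono' ((Q.continuous.measurable.mul (wMeasurable t γ A B w hγ.le hw)).aestronglyMeasurable)
    (Eventually.of_forall fun y => ?_)
  rw [Real.norm_eq_abs, abs_mul]
  calc |Q.eval y| * |w y|
      ≤ |Q.eval y| * (Real.exp (-y ^ 2 + t * y) * |y - t| ^ γ * (A + |B|)) :=
        mul_le_mul_of_nonneg_left (wAbsBound t γ A B w hA hAB hw y) (abs_nonneg _)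
    _ = (|Q.eval y| * Real.exp (-y ^ 2 + t * y)) * (|y - t| ^ γ * (A + |B|)) := by ring
    _ ≤ (C * Real.exp (-(1/4) * (y - t) ^ 2)) * (|y - t| ^ γ * (A + |B|)) := by
        apply mul_le_mul_of_nonneg_right (hC y) (by positivity)
    _ = (C * (A + |B|)) * (|y - t| ^ γ * Real.exp (-(1/4) * (y - t) ^ 2)) := by ring

private lemma intDiv (hγ : 0 < γ) (hA : 0 ≤ A) (hAB : 0 ≤ A + B)
    (hw : ∀ y : ℝ, w y =
      Real.exp (-y ^ 2 + t * y) * |y - t| ^ γ *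
        (A + B * (if 0 < y - t then (1 : ℝ) else 0)))
    (Q : Polynomial ℝ) :
    Integrable (fun y : ℝ => Q.eval y * w y / (y - t)) := by
  obtain ⟨C, hC0, hC⟩ := keyExp t Q
  have hint : Integrable (fun y : ℝ =>
      (C * (A + |B|)) * (|y - t| ^ (γ - 1) * Real.exp (-(1/4) * (y - t) ^ 2))) :=
    ((integrableShift t (by norm_num) (by linarith : (-1:ℝ) < γ - 1)).const_mul _)
  refine hint.mono' (((Q.continuous.measurable.mul
      (wMeasurable t γ A B w hγ.le hw)).div
      ((measurable_id.sub measurable_const))).aestronglyMeasurable)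
    (Eventually.of_forall fun y => ?_)
  rw [Real.norm_eq_abs]
  rcases eq_or_ne y t with rfl | hy
  · have hw0 : w y = 0 := by
      rw [hw y]; simp [Real.zero_rpow hγ.ne']
    rw [hw0]
    simp only [mul_zero, zero_div, abs_zero]
    positivity
  · have hyt : y - t ≠ 0 := sub_ne_zero.mpr hy
    have habs : |y - t| ≠ 0 := abs_ne_zero.mpr hyt
    rw [abs_div, abs_mul]
    calc |Q.eval y| * |w y| / |y - t|
        = |Q.eval y| * (|w y| / |y - t|) := by ring
      _ ≤ |Q.eval y| * ((Real.exp (-y ^ 2 + t * y) * |y - t| ^ γ * (A + |B|)) / |y - t|) := by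
          gcongr
          exact wAbsBound t γ A B w hA hAB hw y
      _ = (|Q.eval y| * Real.exp (-y ^ 2 + t * y)) * ((|y - t| ^ γ / |y - t|) * (A + |B|)) := by
          ring
      _ = (|Q.eval y| * Real.exp (-y ^ 2 + t * y)) * (|y - t| ^ (γ - 1) * (A + |B|)) := by
          rw [Real.rpow_sub_one habs]
      _ ≤ (C * Real.exp (-(1/4) * (y - t) ^ 2)) * (|y - t| ^ (γ - 1) * (A + |B|)) :=
          mul_le_mul_of_nonneg_right (hC y) (by positivity)
      _ = (C * (A + |B|)) * (|y - t| ^ (γ - 1) * Real.exp (-(1/4) * (y - t) ^ 2)) := by ring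
end W

/-- For every n >= 1, (t - alpha_n)(r_{n+1}(t) - r_n(t)) = beta_{n+1} R_{n+1}(t) - beta_n R_{n-1}(t). -/
theorem difference_identity
    (t γ A B : ℝ) (hγ : 0 < γ) (hA : 0 ≤ A) (hAB : 0 ≤ A + B)
    (hABpos : 0 < A ∨ 0 < A + B)
    (w : ℝ → ℝ)
    (hw : ∀ y : ℝ, w y =
      Real.exp (-y ^ 2 + t * y) * |y - t| ^ γ *
        (A + B * (if 0 < y - t then (1 : ℝ) else 0)))
    (P : ℕ → Polynomial ℝ)
    (hmonic : ∀ n, (P n).Monic)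
    (hdeg : ∀ n, (P n).natDegree = n)
    (horth : ∀ m n, m ≠ n →
      ∫ y : ℝ, (P m).eval y * (P n).eval y * w y = 0)
    (h : ℕ → ℝ)
    (hh : ∀ n, h n = ∫ y : ℝ, ((P n).eval y) ^ 2 * w y)
    (hhpos : ∀ n, 0 < h n)
    (α : ℕ → ℝ)
    (hα : ∀ n, α n = (∫ y : ℝ, y * ((P n).eval y) ^ 2 * w y) / h n)
    (β : ℕ → ℝ)
    (hβ : ∀ n, 1 ≤ n → β n = h n / h (n - 1))
    (R : ℕ → ℝ)
    (hR : ∀ n, R n = γ / h n * ∫ y : ℝ, ((P n).eval y) ^ 2 * w y / (y - t))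
    (r : ℕ → ℝ)
    (hr : ∀ n, 1 ≤ n → r n = γ / h (n - 1) *
      ∫ y : ℝ, (P n).eval y * (P (n - 1)).eval y * w y / (y - t)) :
    ∀ n : ℕ, 1 ≤ n →
      (t - α n) * (r (n + 1) - r n) = β (n + 1) * R (n + 1) - β n * R (n - 1) := by
  -- preliminaries
  have hw0 : w t = 0 := by rw [hw t]; simp [Real.zero_rpow hγ.ne']
  have hint : ∀ S : Polynomial ℝ, Integrable fun y : ℝ => S.eval y * w y :=
    intMain t γ A B w hγ hA hAB hw
  have hintd : ∀ S : Polynomial ℝ, Integrable fun y : ℝ => S.eval y * w y / (y - t) :=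
    intDiv t γ A B w hγ hA hAB hw
  have hPne : ∀ k, P k ≠ 0 := fun k => (hmonic k).ne_zero
  have hP0 : P 0 = 1 := (hmonic 0).natDegree_eq_zero.mp (hdeg 0)
  have hJ : ∀ a b : ℕ, a ≠ b → ∫ y : ℝ, (P a * P b).eval y * w y = 0 := by
    intro a b hab
    simp only [eval_mul]
    exact horth a b hab
  have hJsq : ∀ a : ℕ, ∫ y : ℝ, (P a * P a).eval y * w y = h a := by
    intro a
    rw [hh a]
    simp only [eval_mul, pow_two]
  have hJval : ∀ a b : ℕ, ∫ y : ℝ, (P a * P b).eval y * w y = if a = b then h a else 0 := by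
    intro a b
    split_ifs with hab
    · subst hab; exact hJsq a
    · exact hJ a b hab
  -- orthogonality to lower-degree polynomials
  have hL2 : ∀ (N k : ℕ) (Q : Polynomial ℝ), Q.natDegree ≤ N → Q.natDegree < k →
      ∫ y : ℝ, (P k * Q).eval y * w y = 0 := by
    intro N
    induction N with
    | zero =>
      intro k Q hN hk
      obtain ⟨c, rfl⟩ := natDegree_eq_zero.mp (le_antisymm hN (Nat.zero_le _))
      have heq : (fun y : ℝ => (P k * C c).eval y * w y)
          = fun y => c * ((P k * P 0).eval y * w y) := by
        funext y; rw [hP0]; simp only [eval_mul, eval_C, eval_one]; ring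
      rw [heq, integral_const_mul, hJ k 0 (by omega), mul_zero]
    | succ N ih =>
      intro k Q hN hk
      by_cases hQN : Q.natDegree ≤ N
      · exact ih k Q hQN hk
      have hm : Q.natDegree = N + 1 := by omega
      have hQne : Q ≠ 0 := fun h0 => by simp [h0] at hm
      have hcne : Q.leadingCoeff ≠ 0 := leadingCoeff_ne_zero.mpr hQne
      set c := Q.leadingCoeff with hc
      set Q' := Q - C c * P Q.natDegree with hQ'
      have hdeg' : Q'.natDegree < Q.natDegree := by
        have hd1 : Q.degree = (C c * P Q.natDegree).degree := by
          rw [degree_C_mul hcne, degree_eq_natDegree hQne,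
            degree_eq_natDegree (hPne Q.natDegree), hdeg]
        have hlc : Q.leadingCoeff = (C c * P Q.natDegree).leadingCoeff := by
          rw [leadingCoeff_mul, leadingCoeff_C, (hmonic Q.natDegree).leadingCoeff, mul_one]
        have hlt := degree_sub_lt hd1 hQne hlc
        rcases eq_or_ne Q' 0 with h0 | hne'
        · rw [h0]; simp only [natDegree_zero]; omega
        · exact natDegree_lt_natDegree hne' hlt
      have hsplit : (fun y : ℝ => (P k * Q).eval y * w y)
          = fun y => c * ((P k * P Q.natDegree).eval y * w y) + (P k * Q').eval y * w y := by
        funext y; simp only [hQ', eval_mul, eval_sub, eval_C]; ring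
      rw [hsplit, integral_add ((hint (P k * P Q.natDegree)).const_mul c) (hint (P k * Q')),
        integral_const_mul, hJ k Q.natDegree (by omega),
        ih k Q' (by omega) (by omega), mul_zero, add_zero]
  -- main induction-free part
  intro n hn
  obtain ⟨p, rfl⟩ : ∃ p, n = p + 1 := ⟨n - 1, by omega⟩
  have hXP : ∀ k : ℕ, (X * P k).natDegree = k + 1 := by
    intro k
    rw [natDegree_mul X_ne_zero (hPne k), natDegree_X, hdeg]
    omega
  have hXPmonic : ∀ k, (X * P k).Monic := fun k => monic_X.mul (hmonic k)
  have hsub : ∀ (U V : Polynomial ℝ) (d : ℕ), U.Monic → V.Monic →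
      U.natDegree = d → V.natDegree = d →
      U = V ∨ (U - V ≠ 0 ∧ (U - V).natDegree < d) := by
    intro U V d hU hV hUd hVd
    rcases eq_or_ne U V with rfl | hne
    · exact Or.inl rfl
    · right
      refine ⟨sub_ne_zero.mpr hne, ?_⟩
      have hd : U.degree = V.degree := by
        rw [degree_eq_natDegree hU.ne_zero, degree_eq_natDegree hV.ne_zero, hUd, hVd]
      have hlc : U.leadingCoeff = V.leadingCoeff := by rw [hU.leadingCoeff, hV.leadingCoeff]
      have := degree_sub_lt hd hU.ne_zero hlc
      have h2 := natDegree_lt_natDegree (sub_ne_zero.mpr hne) this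
      omega
  -- the residual polynomial D
  set D : Polynomial ℝ := X * P (p+1) - P (p+2) - C (α (p+1)) * P (p+1) - C (β (p+1)) * P p
    with hD
  have hsplit4 : ∀ k, (fun y : ℝ => (P k * D).eval y * w y)
      = fun y => (X * (P k * P (p+1))).eval y * w y
        - ((P k * P (p+2)).eval y * w y
          + (α (p+1) * ((P k * P (p+1)).eval y * w y)
            + β (p+1) * ((P k * P p).eval y * w y))) := by
    intro k; funext y
    simp only [hD, eval_mul, eval_sub, eval_add, eval_X, eval_C]
    ring
  have keyint : ∀ k, ∫ y : ℝ, (P k * D).eval y * w y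
      = (∫ y : ℝ, (X * (P k * P (p+1))).eval y * w y)
        - ((∫ y : ℝ, (P k * P (p+2)).eval y * w y)
          + (α (p+1) * (∫ y : ℝ, (P k * P (p+1)).eval y * w y)
            + β (p+1) * (∫ y : ℝ, (P k * P p).eval y * w y))) := by
    intro k
    have ia : Integrable (fun y : ℝ => α (p+1) * ((P k * P (p+1)).eval y * w y)
        + β (p+1) * ((P k * P p).eval y * w y)) := by
      exact ((hint (P k * P (p+1))).const_mul _).add ((hint (P k * P p)).const_mul _)
    have ib : Integrable (fun y : ℝ => (P k * P (p+2)).eval y * w y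
        + (α (p+1) * ((P k * P (p+1)).eval y * w y)
          + β (p+1) * ((P k * P p).eval y * w y))) := by
      exact (hint (P k * P (p+2))).add ia
    rw [hsplit4 k, integral_sub (hint _) ib,
      integral_add (hint _) ia,
      integral_add ((hint (P k * P (p+1))).const_mul _) ((hint (P k * P p)).const_mul _),
      integral_const_mul, integral_const_mul]
  have hA1n : ∫ y : ℝ, (X * (P (p+1) * P (p+1))).eval y * w y = α (p+1) * h (p+1) := by
    have heq : (fun y : ℝ => (X * (P (p+1) * P (p+1))).eval y * w y)
        = fun y => y * ((P (p+1)).eval y) ^ 2 * w y := by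
      funext y; simp only [eval_mul, eval_X, pow_two]; try ring
    rw [heq, hα (p+1), div_mul_cancel₀ _ (hhpos (p+1)).ne']
  have hA1p : ∫ y : ℝ, (X * (P p * P (p+1))).eval y * w y = h (p+1) := by
    rcases hsub (X * P p) (P (p+1)) (p+1) (hXPmonic p) (hmonic (p+1)) (hXP p) (hdeg (p+1))
      with heq | ⟨hne, hlt⟩
    · rw [show X * (P p * P (p+1)) = P (p+1) * P (p+1) by rw [← mul_assoc, heq]]
      exact hJsq (p+1)
    · have hrepr : X * (P p * P (p+1)) = P (p+1) * P (p+1) + P (p+1) * (X * P p - P (p+1)) := by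
        ring
      have heq2 : (fun y : ℝ => (X * (P p * P (p+1))).eval y * w y)
          = fun y => (P (p+1) * P (p+1)).eval y * w y
            + (P (p+1) * (X * P p - P (p+1))).eval y * w y := by
        funext y; rw [hrepr, eval_add, add_mul]
      rw [heq2, integral_add (hint _) (hint _), hJsq (p+1),
        hL2 (X * P p - P (p+1)).natDegree (p+1) _ le_rfl hlt, add_zero]
  have hA1low : ∀ k, k + 1 < p + 1 → ∫ y : ℝ, (X * (P k * P (p+1))).eval y * w y = 0 := by
    intro k hk
    rw [show X * (P k * P (p+1)) = P (p+1) * (X * P k) by ring]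
    exact hL2 (k+1) (p+1) (X * P k) (le_of_eq (hXP k)) (by rw [hXP k]; omega)
  have hβp1 : β (p+1) = h (p+1) / h p := by
    have := hβ (p+1) (by omega)
    simpa using this
  have key : ∀ k, k ≤ p + 1 → ∫ y : ℝ, (P k * D).eval y * w y = 0 := by
    intro k hk
    rw [keyint k]
    rcases show k = p + 1 ∨ k = p ∨ k + 1 < p + 1 by omega with rfl | hkp | hklow
    · rw [hA1n, hJval, if_neg (show ¬(p + 1 = p + 2) by omega), hJval, if_pos rfl,
        hJval, if_neg (show ¬(p + 1 = p) by omega)]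
      ring
    · rw [hkp, hA1p, hJval, if_neg (show ¬(p = p + 2) by omega), hJval,
        if_neg (show ¬(p = p + 1) by omega), hJval, if_pos rfl, hβp1]
      field_simp
      rw [mul_div_cancel_right₀ _ (hhpos p).ne']; ring
    · rw [hA1low k hklow, hJval, if_neg (by omega), hJval, if_neg (by omega),
        hJval, if_neg (by omega)]
      ring
  have hDdeg : D.natDegree ≤ p + 1 := by
    have h1 : (X * P (p+1) - P (p+2)).natDegree ≤ p + 1 := by
      rcases hsub (X * P (p+1)) (P (p+2)) (p+2) (hXPmonic _) (hmonic _) (hXP _) (hdeg _)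
        with heq | ⟨_, hlt⟩
      · rw [heq]; simp
      · omega
    have h2 : (C (α (p+1)) * P (p+1)).natDegree ≤ p + 1 :=
      (natDegree_C_mul_le _ _).trans (le_of_eq (hdeg _))
    have h3 : (C (β (p+1)) * P p).natDegree ≤ p + 1 :=
      (natDegree_C_mul_le _ _).trans (by rw [hdeg]; omega)
    rw [hD]
    refine le_trans (natDegree_sub_le _ _) (max_le (le_trans (natDegree_sub_le _ _)
      (max_le h1 h2)) h3)
  have hD0 : D = 0 := by
    by_contra hne
    have hcne : D.leadingCoeff ≠ 0 := leadingCoeff_ne_zero.mpr hne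
    set c := D.leadingCoeff with hc
    set m := D.natDegree with hmd
    set D' := D - C c * P m with hD'
    have hsplit : (fun y : ℝ => (P m * D).eval y * w y)
        = fun y => c * ((P m * P m).eval y * w y) + (P m * D').eval y * w y := by
      funext y; simp only [hD', eval_mul, eval_sub, eval_C]; ring
    have hDint := key m (by omega)
    rw [hsplit, integral_add ((hint (P m * P m)).const_mul c) (hint (P m * D')),
      integral_const_mul, hJsq m] at hDint
    have hI2 : ∫ y : ℝ, (P m * D').eval y * w y = 0 := by
      rcases eq_or_ne D' 0 with h0 | hne'
      · rw [h0]; simp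
      · apply hL2 D'.natDegree m D' le_rfl
        have hd1 : D.degree = (C c * P m).degree := by
          rw [degree_C_mul hcne, degree_eq_natDegree hne,
            degree_eq_natDegree (hPne m), hdeg]
        have hlc : D.leadingCoeff = (C c * P m).leadingCoeff := by
          rw [leadingCoeff_mul, leadingCoeff_C, (hmonic m).leadingCoeff, mul_one]
        exact natDegree_lt_natDegree hne' (degree_sub_lt hd1 hne hlc)
    rw [hI2, add_zero] at hDint
    exact hcne ((mul_eq_zero.mp hDint).resolve_right (hhpos m).ne')
  have hrec : (X - C (α (p+1))) * P (p+1) = P (p+2) + C (β (p+1)) * P p := by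
    have hDexpr : X * P (p+1) - P (p+2) - C (α (p+1)) * P (p+1) - C (β (p+1)) * P p = 0 :=
      hD ▸ hD0
    linear_combination hDexpr
  -- integral identities with the Cauchy kernel
  have hK1 : ∀ S : Polynomial ℝ, (∫ y : ℝ, ((X - C t) * S).eval y * w y / (y - t))
      = ∫ y : ℝ, S.eval y * w y := by
    intro S
    have heq : (fun y : ℝ => ((X - C t) * S).eval y * w y / (y - t))
        = fun y => S.eval y * w y := by
      funext y
      rcases eq_or_ne y t with rfl | hy
      · simp [hw0]
      · have hyt : y - t ≠ 0 := sub_ne_zero.mpr hy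
        simp only [eval_mul, eval_sub, eval_X, eval_C]
        field_simp
    rw [heq]
  have hK2 : ∀ (c : ℝ) (S : Polynomial ℝ), (∫ y : ℝ, (C c * S).eval y * w y / (y - t))
      = c * ∫ y : ℝ, S.eval y * w y / (y - t) := by
    intro c S
    rw [show (fun y : ℝ => (C c * S).eval y * w y / (y - t))
        = fun y => c * (S.eval y * w y / (y - t)) from
      funext fun y => by simp only [eval_mul, eval_C]; ring, integral_const_mul]
  have hK3 : ∀ S1 S2 : Polynomial ℝ, (∫ y : ℝ, (S1 + S2).eval y * w y / (y - t))
      = (∫ y : ℝ, S1.eval y * w y / (y - t)) + ∫ y : ℝ, S2.eval y * w y / (y - t) := by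
    intro S1 S2
    rw [show (fun y : ℝ => (S1 + S2).eval y * w y / (y - t))
        = fun y => S1.eval y * w y / (y - t) + S2.eval y * w y / (y - t) from
      funext fun y => by rw [eval_add, add_mul, add_div], integral_add (hintd _) (hintd _)]
  set M1 := ∫ y : ℝ, (P (p+2) * P (p+1)).eval y * w y / (y - t) with hM1
  set M2 := ∫ y : ℝ, (P (p+1) * P p).eval y * w y / (y - t) with hM2
  set Ra := ∫ y : ℝ, (P (p+2) * P (p+2)).eval y * w y / (y - t) with hRa
  set Rb := ∫ y : ℝ, (P (p+2) * P p).eval y * w y / (y - t) with hRb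
  set Rd := ∫ y : ℝ, (P p * P p).eval y * w y / (y - t) with hRd
  have e1 : C (t - α (p+1)) * (P (p+2) * P (p+1)) + (X - C t) * (P (p+2) * P (p+1))
      = P (p+2) * P (p+2) + C (β (p+1)) * (P (p+2) * P p) := by
    rw [map_sub]
    linear_combination (P (p+2)) * hrec
  have e2 : C (t - α (p+1)) * (P (p+1) * P p) + (X - C t) * (P (p+1) * P p)
      = P (p+2) * P p + C (β (p+1)) * (P p * P p) := by
    rw [map_sub]
    linear_combination (P p) * hrec
  have Eq1 : (t - α (p+1)) * M1 + (∫ y : ℝ, (P (p+2) * P (p+1)).eval y * w y)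
      = Ra + β (p+1) * Rb := by
    have hstep : (∫ y : ℝ, ((C (t - α (p+1)) * (P (p+2) * P (p+1))
          + (X - C t) * (P (p+2) * P (p+1))).eval y * w y / (y - t)))
        = ∫ y : ℝ, ((P (p+2) * P (p+2) + C (β (p+1)) * (P (p+2) * P p)).eval y * w y / (y - t)) := by
      rw [e1]
    rw [hK3, hK3, hK2, hK2, hK1] at hstep
    exact hstep
  have Eq2 : (t - α (p+1)) * M2 + (∫ y : ℝ, (P (p+1) * P p).eval y * w y)
      = Rb + β (p+1) * Rd := by
    have hstep : (∫ y : ℝ, ((C (t - α (p+1)) * (P (p+1) * P p)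
          + (X - C t) * (P (p+1) * P p)).eval y * w y / (y - t)))
        = ∫ y : ℝ, ((P (p+2) * P p + C (β (p+1)) * (P p * P p)).eval y * w y / (y - t)) := by
      rw [e2]
    rw [hK3, hK3, hK2, hK2, hK1] at hstep
    exact hstep
  rw [hJ (p+2) (p+1) (by omega)] at Eq1
  rw [hJ (p+1) p (by omega)] at Eq2
  rw [add_zero] at Eq1 Eq2
  -- unfold r, R, β in the goal
  have hr2 : r (p+2) = γ / h (p+1) * M1 := by
    have := hr (p+2) (by omega)
    simp only [show p + 2 - 1 = p + 1 from rfl] at this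
    rw [this, hM1]
    congr 1
    simp only [eval_mul]
  have hr1 : r (p+1) = γ / h p * M2 := by
    have := hr (p+1) (by omega)
    simp only [Nat.add_sub_cancel] at this
    rw [this, hM2]
    congr 1
    simp only [eval_mul]
  have hR2 : R (p+2) = γ / h (p+2) * Ra := by
    rw [hR (p+2), hRa]
    congr 1
    simp only [eval_mul, pow_two]
  have hR0 : R p = γ / h p * Rd := by
    rw [hR p, hRd]
    congr 1
    simp only [eval_mul, pow_two]
  have hβp2 : β (p+2) = h (p+2) / h (p+1) := by
    have := hβ (p+2) (by omega)
    simpa using this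
  have hgoal : (p + 1 + 1 : ℕ) = p + 2 := rfl
  simp only [hgoal, Nat.add_sub_cancel]
  rw [hr2, hr1, hR2, hR0, hβp2, hβp1]
  have expand : (t - α (p+1)) * (γ / h (p+1) * M1 - γ / h p * M2)
      = γ / h (p+1) * ((t - α (p+1)) * M1) - γ / h p * ((t - α (p+1)) * M2) := by ring
  rw [expand, Eq1, Eq2, hβp1]
  have h0 := (hhpos p).ne'
  have h1 := (hhpos (p+1)).ne'
  have h2 := (hhpos (p+2)).ne'
  field_simp
  ring
end
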